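/- arXiv:1512.03121 — 9 statements merged into one kernel-verified Lean document; each statement's English description precedes it below -/
import Mathlib

section
/- If the section σ : N → M is a solution of the Π-HJE for (M, X_H) and σ is isotropic, then d(H∘σ) = 0, i.e. the differential of the composite function H∘σ : N → ℝ vanishes at every point of N. -/
open Manifold Set

noncomputable section

/-- If the section `σ` is a solution of the `π`-Hamilton–Jacobi equation for `(M, X_H)` and
`σ` is isotropic (each `Im σ_{*,n}` is contained in its symplectic orthogonal), then
`d(H ∘ σ) = 0`. -/
theorem hje_solution_isotropic_implies_dHsigma_eq_zero
    {EM HM M EN HN N : Type*}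
    [NormedAddCommGroup EM] [NormedSpace ℝ EM] [TopologicalSpace HM]
    [TopologicalSpace M] [ChartedSpace HM M]
    [NormedAddCommGroup EN] [NormedSpace ℝ EN] [TopologicalSpace HN]
    [TopologicalSpace N] [ChartedSpace HN N]
    {IM : ModelWithCorners ℝ EM HM} {IN : ModelWithCorners ℝ EN HN}
    [IsManifold IM (⊤ : ℕ∞) M] [IsManifold IN (⊤ : ℕ∞) N]
    [FiniteDimensional ℝ EM] [FiniteDimensional ℝ EN]
    [IM.Boundaryless] [IN.Boundaryless]
    -- the fibration
    (π : M → N) (hπ : ContMDiff IM IN (⊤ : ℕ∞) π)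
    (hπsurj : Function.Surjective π)
    (hπsub : ∀ m, Function.Surjective (mfderiv IM IN π m))
    -- the pointwise nondegenerate alternating bilinear form ω
    (ω : ∀ m : M, TangentSpace IM m →ₗ[ℝ] TangentSpace IM m →ₗ[ℝ] ℝ)
    (hωalt : ∀ (m : M) (v : TangentSpace IM m), ω m v v = 0)
    (hωnd : ∀ (m : M) (v : TangentSpace IM m), (∀ w, ω m v w = 0) → v = 0)
    -- the Hamiltonian and its (smooth) Hamiltonian vector field
    (H : M → ℝ) (hH : ContMDiff IM 𝓘(ℝ, ℝ) (⊤ : ℕ∞) H)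
    (XH : ∀ m : M, TangentSpace IM m)
    (hXHsmooth : ContMDiff IM IM.tangent (⊤ : ℕ∞) (fun m => (⟨m, XH m⟩ : TangentBundle IM M)))
    (hXH : ∀ (m : M) (v : TangentSpace IM m), ω m (XH m) v = mfderiv IM 𝓘(ℝ, ℝ) H m v)
    -- the section σ, a solution of the π-HJE for (M, X_H)
    (σ : N → M) (hσ : ContMDiff IN IM (⊤ : ℕ∞) σ) (hsec : ∀ n, π (σ n) = n)
    (hsol : ∀ n, mfderiv IN IM σ n (mfderiv IM IN π (σ n) (XH (σ n))) = XH (σ n))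
    -- σ is isotropic: Im σ_{*,n} ⊆ (Im σ_{*,n})^ω
    (hiso : ∀ n : N, Set.range (mfderiv IN IM σ n) ⊆
      {u : TangentSpace IM (σ n) | ∀ v ∈ Set.range (mfderiv IN IM σ n), ω (σ n) v u = 0}) :
    ∀ n : N, mfderiv IN 𝓘(ℝ, ℝ) (H ∘ σ) n = 0 := by
  intro n
  have hHd : MDifferentiableAt IM 𝓘(ℝ, ℝ) H (σ n) := (hH (σ n)).mdifferentiableAt (by simp)
  have hσd : MDifferentiableAt IN IM σ n := (hσ n).mdifferentiableAt (by simp)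
  rw [mfderiv_comp n hHd hσd]
  ext w
  simp only [ContinuousLinearMap.comp_apply, ContinuousLinearMap.zero_apply]
  rw [← hXH (σ n) (mfderiv IN IM σ n w)]
  exact hiso n ⟨w, rfl⟩ (XH (σ n)) ⟨_, hsol n⟩
end
end

section
/- Let σ : N → M be a smooth section of Π satisfying d(H∘σ) = i_{X_H^σ} σ*ω, i.e. d(H∘σ)_n(y) = ω_{σ(n)}(σ_{*,n}(X_H^σ(n)), σ_{*,n}(y)) for all n ∈ N and y ∈ T_nN. Then for every n ∈ N the vector X_H(σ(n)) − σ_{*,n}(X_H^σ(n)) belongs to Ker Π_{*,σ(n)} ∩ (Im σ_{*,n})^ω, where X_H^σ(n) := Π_{*,σ(n)}(X_H(σ(n))). -/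
open Manifold Set

noncomputable section

/-- If a section `σ` of `π` satisfies `d(H∘σ) = i_{X_H^σ} σ*ω`, then for every `n` the vector
`X_H(σ(n)) − σ_{*,n}(X_H^σ(n))` lies in `Ker π_{*,σ(n)} ∩ (Im σ_{*,n})^ω`. -/
theorem defect_in_ker_inter_sympOrth_of_contraction_eq
    {EM HM M EN HN N : Type*}
    [NormedAddCommGroup EM] [NormedSpace ℝ EM] [TopologicalSpace HM]
    [TopologicalSpace M] [ChartedSpace HM M]
    [NormedAddCommGroup EN] [NormedSpace ℝ EN] [TopologicalSpace HN]
    [TopologicalSpace N] [ChartedSpace HN N]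
    {IM : ModelWithCorners ℝ EM HM} {IN : ModelWithCorners ℝ EN HN}
    [IsManifold IM ((⊤ : ℕ∞) : WithTop ℕ∞) M] [IsManifold IN ((⊤ : ℕ∞) : WithTop ℕ∞) N]
    [FiniteDimensional ℝ EM] [FiniteDimensional ℝ EN]
    [IM.Boundaryless] [IN.Boundaryless]
    -- the fibration
    (π : M → N) (hπ : ContMDiff IM IN (⊤ : ℕ∞) π)
    (hπsurj : Function.Surjective π)
    (hπsub : ∀ m, Function.Surjective (mfderiv IM IN π m))
    -- the pointwise nondegenerate alternating bilinear form ω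
    (ω : ∀ m : M, TangentSpace IM m →ₗ[ℝ] TangentSpace IM m →ₗ[ℝ] ℝ)
    (hωalt : ∀ (m : M) (v : TangentSpace IM m), ω m v v = 0)
    (hωnd : ∀ (m : M) (v : TangentSpace IM m), (∀ w, ω m v w = 0) → v = 0)
    -- the Hamiltonian and its (smooth) Hamiltonian vector field
    (H : M → ℝ) (hH : ContMDiff IM 𝓘(ℝ, ℝ) (⊤ : ℕ∞) H)
    (XH : ∀ m : M, TangentSpace IM m)
    (hXHsmooth : ContMDiff IM IM.tangent (⊤ : ℕ∞) (fun m => (⟨m, XH m⟩ : TangentBundle IM M)))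
    (hXH : ∀ (m : M) (v : TangentSpace IM m), ω m (XH m) v = mfderiv IM 𝓘(ℝ, ℝ) H m v)
    -- the section σ of π, satisfying d(H∘σ) = i_{X_H^σ} σ*ω
    (σ : N → M) (hσ : ContMDiff IN IM (⊤ : ℕ∞) σ) (hsec : ∀ n, π (σ n) = n)
    (heq : ∀ (n : N) (y : TangentSpace IN n),
      mfderiv IN 𝓘(ℝ, ℝ) (H ∘ σ) n y =
        ω (σ n) (mfderiv IN IM σ n (mfderiv IM IN π (σ n) (XH (σ n))))
          (mfderiv IN IM σ n y)) :
    ∀ n : N,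
      mfderiv IM IN π (σ n)
          (XH (σ n) - mfderiv IN IM σ n (mfderiv IM IN π (σ n) (XH (σ n)))) = 0 ∧
      ∀ v ∈ Set.range (mfderiv IN IM σ n),
        ω (σ n) v (XH (σ n) - mfderiv IN IM σ n (mfderiv IM IN π (σ n) (XH (σ n)))) = 0 := by
  intro n
  have hσd : MDifferentiableAt IN IM σ n := (hσ n).mdifferentiableAt (by simp)
  have hπd : MDifferentiableAt IM IN π (σ n) := (hπ (σ n)).mdifferentiableAt (by simp)
  have hHd : MDifferentiableAt IM 𝓘(ℝ, ℝ) H (σ n) := (hH (σ n)).mdifferentiableAt (by simp)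
  -- chain rule for π ∘ σ = id
  have hid : π ∘ σ = id := funext hsec
  have hchain : (mfderiv IM IN π (σ n)).comp (mfderiv IN IM σ n) =
      ContinuousLinearMap.id ℝ (TangentSpace IN n) := by
    rw [← mfderiv_comp n hπd hσd, hid, mfderiv_id]
  have hret : ∀ y : TangentSpace IN n,
      mfderiv IM IN π (σ n) (mfderiv IN IM σ n y) = y := fun y => by
    have := congrArg (fun f => f y) hchain
    exact this
  -- skew-symmetry
  have hskew : ∀ (u v : TangentSpace IM (σ n)), ω (σ n) u v = - ω (σ n) v u := by
    intro u v
    have h := hωalt (σ n) (u + v)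
    simp only [map_add, LinearMap.add_apply, hωalt] at h
    linarith
  constructor
  · rw [map_sub, sub_eq_zero]
    exact (hret _).symm
  · rintro v ⟨y, rfl⟩
    have hHchain : mfderiv IN 𝓘(ℝ, ℝ) (H ∘ σ) n y =
        mfderiv IM 𝓘(ℝ, ℝ) H (σ n) (mfderiv IN IM σ n y) := by
      rw [mfderiv_comp n hHd hσd]; rfl
    have h1 : ω (σ n) (XH (σ n)) (mfderiv IN IM σ n y) =
        ω (σ n) (mfderiv IN IM σ n (mfderiv IM IN π (σ n) (XH (σ n))))
          (mfderiv IN IM σ n y) := by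
      rw [hXH, ← hHchain, heq]
    have := hskew (mfderiv IN IM σ n y) (XH (σ n))
    have h2 := hskew (mfderiv IN IM σ n y)
      (mfderiv IN IM σ n (mfderiv IM IN π (σ n) (XH (σ n))))
    rw [map_sub, this, h2, h1]
    ring
end
end

section
/- Suppose the fibration Π is isotropic (in particular this holds if Π is Lagrangian). Then a smooth section σ : N → M of Π is a solution of the Π-HJE for (M, X_H) if and only if d(H∘σ) = i_{X_H^σ} σ*ω, i.e. if and only if d(H∘σ)_n(y) = ω_{σ(n)}(σ_{*,n}(X_H^σ(n)), σ_{*,n}(y)) for all n ∈ N and y ∈ T_nN, where X_H^σ(n) := Π_{*,σ(n)}(X_H(σ(n))). -/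
open Manifold Set

noncomputable section

/-- If the fibration `π` is isotropic, then a section `σ` of `π` is a solution of the
`π`-Hamilton–Jacobi equation for `(M, X_H)` if and only if `d(H∘σ) = i_{X_H^σ} σ*ω`. -/
theorem hje_solution_iff_contraction_of_isotropic_fibration
    {EM HM M EN HN N : Type*}
    [NormedAddCommGroup EM] [NormedSpace ℝ EM] [TopologicalSpace HM]
    [TopologicalSpace M] [ChartedSpace HM M]
    [NormedAddCommGroup EN] [NormedSpace ℝ EN] [TopologicalSpace HN]
    [TopologicalSpace N] [ChartedSpace HN N]
    {IM : ModelWithCorners ℝ EM HM} {IN : ModelWithCorners ℝ EN HN}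
    [IsManifold IM (⊤ : ℕ∞) M] [IsManifold IN (⊤ : ℕ∞) N]
    [FiniteDimensional ℝ EM] [FiniteDimensional ℝ EN]
    [IM.Boundaryless] [IN.Boundaryless]
    -- the fibration
    (π : M → N) (hπ : ContMDiff IM IN (⊤ : ℕ∞) π)
    (hπsurj : Function.Surjective π)
    (hπsub : ∀ m, Function.Surjective (mfderiv IM IN π m))
    -- the pointwise nondegenerate alternating bilinear form ω
    (ω : ∀ m : M, TangentSpace IM m →ₗ[ℝ] TangentSpace IM m →ₗ[ℝ] ℝ)
    (hωalt : ∀ (m : M) (v : TangentSpace IM m), ω m v v = 0)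
    (hωnd : ∀ (m : M) (v : TangentSpace IM m), (∀ w, ω m v w = 0) → v = 0)
    -- the fibration π is isotropic: Ker π_{*,m} ⊆ (Ker π_{*,m})^ω
    (hπiso : ∀ (m : M) (u v : TangentSpace IM m),
      mfderiv IM IN π m v = 0 → mfderiv IM IN π m u = 0 → ω m v u = 0)
    -- the Hamiltonian and its (smooth) Hamiltonian vector field
    (H : M → ℝ) (hH : ContMDiff IM 𝓘(ℝ, ℝ) (⊤ : ℕ∞) H)
    (XH : ∀ m : M, TangentSpace IM m)
    (hXHsmooth : ContMDiff IM IM.tangent (⊤ : ℕ∞) (fun m => (⟨m, XH m⟩ : TangentBundle IM M)))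
    (hXH : ∀ (m : M) (v : TangentSpace IM m), ω m (XH m) v = mfderiv IM 𝓘(ℝ, ℝ) H m v)
    -- the section σ of π
    (σ : N → M) (hσ : ContMDiff IN IM (⊤ : ℕ∞) σ) (hsec : ∀ n, π (σ n) = n) :
    (∀ n, mfderiv IN IM σ n (mfderiv IM IN π (σ n) (XH (σ n))) = XH (σ n)) ↔
      (∀ (n : N) (y : TangentSpace IN n),
        mfderiv IN 𝓘(ℝ, ℝ) (H ∘ σ) n y =
          ω (σ n) (mfderiv IN IM σ n (mfderiv IM IN π (σ n) (XH (σ n))))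
            (mfderiv IN IM σ n y)) := by

  -- basic differentiability facts
  have hσd : ∀ n, MDifferentiableAt IN IM σ n := fun n => hσ.mdifferentiableAt (by simp)
  have hπd : ∀ m, MDifferentiableAt IM IN π m := fun m => hπ.mdifferentiableAt (by simp)
  have hHd : ∀ m, MDifferentiableAt IM 𝓘(ℝ, ℝ) H m := fun m => hH.mdifferentiableAt (by simp)
  -- π ∘ σ = id, so π_* ∘ σ_* = id
  have hid : (π ∘ σ) = id := funext hsec
  have hcomp : ∀ (n : N) (y : TangentSpace IN n),
      mfderiv IM IN π (σ n) (mfderiv IN IM σ n y) = y := by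
    intro n y
    have h1 : mfderiv IN IN (π ∘ σ) n
        = (mfderiv IM IN π (σ n)).comp (mfderiv IN IM σ n) :=
      mfderiv_comp n (hπd (σ n)) (hσd n)
    have h2 : mfderiv IN IN (π ∘ σ) n = ContinuousLinearMap.id ℝ (TangentSpace IN n) := by
      rw [hid]; exact mfderiv_id
    have := h2 ▸ h1
    have h3 := congrArg (fun (L : TangentSpace IN n →L[ℝ] TangentSpace IN n) => L y) this.symm
    exact h3
  -- chain rule for H ∘ σ
  have hHchain : ∀ (n : N) (y : TangentSpace IN n),
      mfderiv IN 𝓘(ℝ, ℝ) (H ∘ σ) n y = mfderiv IM 𝓘(ℝ, ℝ) H (σ n) (mfderiv IN IM σ n y) := by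
    intro n y
    have h1 : mfderiv IN 𝓘(ℝ, ℝ) (H ∘ σ) n
        = (mfderiv IM 𝓘(ℝ, ℝ) H (σ n)).comp (mfderiv IN IM σ n) :=
      mfderiv_comp n (hHd (σ n)) (hσd n)
    rw [h1]; rfl
  constructor
  · intro hsol n y
    rw [hHchain n y, hsol n, ← hXH (σ n) (mfderiv IN IM σ n y)]
  · intro hcon n
    set m := σ n with hm
    set u : TangentSpace IM m := XH m - mfderiv IN IM σ n (mfderiv IM IN π m (XH m)) with hu
    have hker_u : mfderiv IM IN π m u = 0 := by
      rw [hu, map_sub, hcomp n (mfderiv IM IN π m (XH m)), sub_self]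
    have hzero : ∀ w : TangentSpace IM m, ω m u w = 0 := by
      intro w
      have hdecomp : w = mfderiv IN IM σ n (mfderiv IM IN π m w)
          + (w - mfderiv IN IM σ n (mfderiv IM IN π m w)) := by abel
      have hker_w : mfderiv IM IN π m (w - mfderiv IN IM σ n (mfderiv IM IN π m w)) = 0 := by
        rw [map_sub, hcomp n (mfderiv IM IN π m w), sub_self]
      have h1 : ω m u (mfderiv IN IM σ n (mfderiv IM IN π m w)) = 0 := by
        rw [hu, map_sub, LinearMap.sub_apply]
        have := hcon n (mfderiv IM IN π m w)
        rw [hHchain n (mfderiv IM IN π m w)] at this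
        rw [← hXH m (mfderiv IN IM σ n (mfderiv IM IN π m w))] at this
        rw [← this, sub_self]
      have h2 : ω m u (w - mfderiv IN IM σ n (mfderiv IM IN π m w)) = 0 :=
        hπiso m (w - mfderiv IN IM σ n (mfderiv IM IN π m w)) u hker_u hker_w
      calc ω m u w
          = ω m u (mfderiv IN IM σ n (mfderiv IM IN π m w)
            + (w - mfderiv IN IM σ n (mfderiv IM IN π m w))) := by rw [← hdecomp]
        _ = 0 := by rw [map_add, h1, h2, add_zero]
    have := hωnd m u hzero
    rw [hu] at this
    have : XH m = mfderiv IN IM σ n (mfderiv IM IN π m (XH m)) := by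
      have := sub_eq_zero.mp this; exact this
    exact this.symm
end
end

section
/- Let σ : N → M be a smooth section of Π. (1) If σ is co-isotropic, then σ is a solution of the Π-HJE for (M, X_H) if and only if d(H∘σ) = i_{X_H^σ} σ*ω, i.e. d(H∘σ)_n(y) = ω_{σ(n)}(σ_{*,n}(X_H^σ(n)), σ_{*,n}(y)) for all n ∈ N, y ∈ T_nN, where X_H^σ(n) := Π_{*,σ(n)}(X_H(σ(n))). (2) If σ is Lagrangian, then σ is a solution of the Π-HJE for (M, X_H) if and only if d(H∘σ) = 0. -/
open Manifold Set

noncomputable section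

/-- (1) If the section `σ` is co-isotropic, then `σ` solves the `π`-Hamilton–Jacobi equation
for `(M, X_H)` iff `d(H∘σ) = i_{X_H^σ} σ*ω`.  (2) If `σ` is Lagrangian, then `σ` solves the
`π`-Hamilton–Jacobi equation for `(M, X_H)` iff `d(H∘σ) = 0`. -/
theorem hje_solution_iff_of_coisotropic_or_lagrangian_section
    {EM HM M EN HN N : Type*}
    [NormedAddCommGroup EM] [NormedSpace ℝ EM] [TopologicalSpace HM]
    [TopologicalSpace M] [ChartedSpace HM M]
    [NormedAddCommGroup EN] [NormedSpace ℝ EN] [TopologicalSpace HN]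
    [TopologicalSpace N] [ChartedSpace HN N]
    {IM : ModelWithCorners ℝ EM HM} {IN : ModelWithCorners ℝ EN HN}
    [IsManifold IM (⊤ : ℕ∞) M] [IsManifold IN (⊤ : ℕ∞) N]
    [FiniteDimensional ℝ EM] [FiniteDimensional ℝ EN]
    [IM.Boundaryless] [IN.Boundaryless]
    -- the fibration
    (π : M → N) (hπ : ContMDiff IM IN (⊤ : ℕ∞) π)
    (hπsurj : Function.Surjective π)
    (hπsub : ∀ m, Function.Surjective (mfderiv IM IN π m))
    -- the pointwise nondegenerate alternating bilinear form ω
    (ω : ∀ m : M, TangentSpace IM m →ₗ[ℝ] TangentSpace IM m →ₗ[ℝ] ℝ)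
    (hωalt : ∀ (m : M) (v : TangentSpace IM m), ω m v v = 0)
    (hωnd : ∀ (m : M) (v : TangentSpace IM m), (∀ w, ω m v w = 0) → v = 0)
    -- the Hamiltonian and its (smooth) Hamiltonian vector field
    (H : M → ℝ) (hH : ContMDiff IM 𝓘(ℝ, ℝ) (⊤ : ℕ∞) H)
    (XH : ∀ m : M, TangentSpace IM m)
    (hXHsmooth : ContMDiff IM IM.tangent (⊤ : ℕ∞) (fun m => (⟨m, XH m⟩ : TangentBundle IM M)))
    (hXH : ∀ (m : M) (v : TangentSpace IM m), ω m (XH m) v = mfderiv IM 𝓘(ℝ, ℝ) H m v)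
    -- the section σ of π
    (σ : N → M) (hσ : ContMDiff IN IM (⊤ : ℕ∞) σ) (hsec : ∀ n, π (σ n) = n) :
    -- (1) σ co-isotropic: (Im σ_{*,n})^ω ⊆ Im σ_{*,n}
    ((∀ n : N,
        {u : TangentSpace IM (σ n) | ∀ v ∈ Set.range (mfderiv IN IM σ n), ω (σ n) v u = 0} ⊆
          Set.range (mfderiv IN IM σ n)) →
      ((∀ n, mfderiv IN IM σ n (mfderiv IM IN π (σ n) (XH (σ n))) = XH (σ n)) ↔
        (∀ (n : N) (y : TangentSpace IN n),
          mfderiv IN 𝓘(ℝ, ℝ) (H ∘ σ) n y =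
            ω (σ n) (mfderiv IN IM σ n (mfderiv IM IN π (σ n) (XH (σ n))))
              (mfderiv IN IM σ n y)))) ∧
    -- (2) σ Lagrangian: Im σ_{*,n} = (Im σ_{*,n})^ω
    ((∀ n : N,
        Set.range (mfderiv IN IM σ n) =
          {u : TangentSpace IM (σ n) | ∀ v ∈ Set.range (mfderiv IN IM σ n), ω (σ n) v u = 0}) →
      ((∀ n, mfderiv IN IM σ n (mfderiv IM IN π (σ n) (XH (σ n))) = XH (σ n)) ↔
        (∀ n : N, mfderiv IN 𝓘(ℝ, ℝ) (H ∘ σ) n = 0))) := by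

  -- skew-symmetry of ω
  have skew : ∀ (m : M) (v w : TangentSpace IM m), ω m v w = - ω m w v := by
    intro m v w
    have h := hωalt m (v + w)
    simp only [map_add, LinearMap.add_apply, hωalt m v, hωalt m w] at h
    linarith
  have hσd : ∀ n, MDifferentiableAt IN IM σ n := fun n => hσ.mdifferentiableAt (by simp)
  have hπd : ∀ m, MDifferentiableAt IM IN π m := fun m => hπ.mdifferentiableAt (by simp)
  have hHd : ∀ m, MDifferentiableAt IM 𝓘(ℝ, ℝ) H m := fun m => hH.mdifferentiableAt (by simp)
  -- P ∘ S = id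
  have hPS : ∀ (n : N) (y : TangentSpace IN n),
      mfderiv IM IN π (σ n) (mfderiv IN IM σ n y) = y := by
    intro n y
    have hcomp := mfderiv_comp n (hπd (σ n)) (hσd n)
    have hid : (π ∘ σ) = id := funext hsec
    rw [hid, mfderiv_id] at hcomp
    have := ContinuousLinearMap.ext_iff.mp hcomp y
    exact this.symm
  -- chain rule for H ∘ σ
  have hchain : ∀ (n : N) (y : TangentSpace IN n),
      mfderiv IN 𝓘(ℝ, ℝ) (H ∘ σ) n y
        = ω (σ n) (XH (σ n)) (mfderiv IN IM σ n y) := by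
    intro n y
    have hcomp := mfderiv_comp n (hHd (σ n)) (hσd n)
    rw [hcomp]
    exact (hXH (σ n) (mfderiv IN IM σ n y)).symm
  constructor
  · -- co-isotropic case
    intro hco
    constructor
    · intro hsol n y
      rw [hchain n y, hsol n]
    · intro heq n
      have h : ∀ y : TangentSpace IN n,
          ω (σ n) (XH (σ n)) (mfderiv IN IM σ n y)
            = ω (σ n) (mfderiv IN IM σ n (mfderiv IM IN π (σ n) (XH (σ n))))
                (mfderiv IN IM σ n y) := by
        intro y
        rw [← hchain n y]
        exact heq n y
      have hmem : XH (σ n) - mfderiv IN IM σ n (mfderiv IM IN π (σ n) (XH (σ n))) ∈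
          {u : TangentSpace IM (σ n) |
            ∀ v ∈ Set.range (mfderiv IN IM σ n), ω (σ n) v u = 0} := by
        rintro v ⟨y, rfl⟩
        rw [skew]
        simp only [map_sub, LinearMap.sub_apply, h y, sub_self, neg_zero]
      obtain ⟨z, hz⟩ := hco n hmem
      have hz0 : z = 0 := by
        have h2 := hPS n z
        rw [hz, map_sub, hPS n (mfderiv IM IN π (σ n) (XH (σ n)))] at h2
        rw [sub_self] at h2
        exact h2.symm
      rw [hz0, map_zero] at hz
      exact (sub_eq_zero.mp hz.symm).symm
  · -- Lagrangian case
    intro hlag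
    have hiso : ∀ (n : N) (u v : TangentSpace IM (σ n)),
        u ∈ Set.range (mfderiv IN IM σ n) → v ∈ Set.range (mfderiv IN IM σ n) →
        ω (σ n) v u = 0 := fun n u v hu hv => ((hlag n).subset hu) v hv
    constructor
    · intro hsol n
      ext y
      show mfderiv IN 𝓘(ℝ, ℝ) (H ∘ σ) n y = 0
      rw [hchain n y, ← hsol n]
      exact hiso n _ _ ⟨y, rfl⟩ ⟨_, rfl⟩
    · intro hzero n
      have h0 : ∀ y : TangentSpace IN n,
          ω (σ n) (XH (σ n)) (mfderiv IN IM σ n y) = 0 := by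
        intro y
        rw [← hchain n y, hzero n]
        rfl
      have hmem : XH (σ n) ∈
          {u : TangentSpace IM (σ n) |
            ∀ v ∈ Set.range (mfderiv IN IM σ n), ω (σ n) v u = 0} := by
        rintro v ⟨y, rfl⟩
        rw [skew, h0 y, neg_zero]
      rw [← hlag n] at hmem
      obtain ⟨z, hz⟩ := hmem
      rw [← hz, hPS n z]
end
end

section
/- A surjective local diffeomorphism Σ : N × Λ → M is a complete solution of the Π-HJE for (M,X) if and only if Π ∘ Σ = p_N and Σ_* ∘ X^Σ = X ∘ Σ, where X^Σ is the vector field on N × Λ given by X^Σ(n,λ) = (Π_{*,Σ(n,λ)}(X(Σ(n,λ))), 0) (equivalently, X^Σ is the unique vector field with (p_N)_* ∘ X^Σ = Π_* ∘ X ∘ Σ and (p_Λ)_* ∘ X^Σ = 0). In particular, in that case X and X^Σ are Σ-related. -/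
open Manifold Set

noncomputable section

/-- A surjective local diffeomorphism `Σ : N × Λ → M` is a complete solution of the
`π`-Hamilton–Jacobi equation for `(M, X)` iff `π ∘ Σ = p_N` and `Σ_* ∘ X^Σ = X ∘ Σ`,
where `X^Σ(n,λ) = (π_{*}(X(Σ(n,λ))), 0)`; in particular `X` and `X^Σ` are `Σ`-related. -/
theorem complete_solution_iff_sigma_related
    {EM HM M EN HN N EL HL Λ : Type*}
    [NormedAddCommGroup EM] [NormedSpace ℝ EM] [TopologicalSpace HM]
    [TopologicalSpace M] [ChartedSpace HM M]
    [NormedAddCommGroup EN] [NormedSpace ℝ EN] [TopologicalSpace HN]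
    [TopologicalSpace N] [ChartedSpace HN N]
    [NormedAddCommGroup EL] [NormedSpace ℝ EL] [TopologicalSpace HL]
    [TopologicalSpace Λ] [ChartedSpace HL Λ]
    {IM : ModelWithCorners ℝ EM HM} {IN : ModelWithCorners ℝ EN HN}
    {IL : ModelWithCorners ℝ EL HL}
    [IsManifold IM (⊤ : ℕ∞) M] [IsManifold IN (⊤ : ℕ∞) N]
    [IsManifold IL (⊤ : ℕ∞) Λ]
    [FiniteDimensional ℝ EM] [FiniteDimensional ℝ EN] [FiniteDimensional ℝ EL]
    [IM.Boundaryless] [IN.Boundaryless] [IL.Boundaryless]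
    -- dim Λ = dim M - dim N
    (hdim : Module.finrank ℝ EL = Module.finrank ℝ EM - Module.finrank ℝ EN)
    -- the fibration
    (π : M → N) (hπ : ContMDiff IM IN (⊤ : ℕ∞) π)
    (hπsurj : Function.Surjective π)
    (hπsub : ∀ m, Function.Surjective (mfderiv IM IN π m))
    -- the (smooth) vector field X
    (X : ∀ m : M, TangentSpace IM m)
    (hX : ContMDiff IM IM.tangent (⊤ : ℕ∞) (fun m => (⟨m, X m⟩ : TangentBundle IM M)))
    -- Σ : N × Λ → M, a surjective local diffeomorphism
    (S : N × Λ → M)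
    (hSsurj : Function.Surjective S)
    (hSdiff : IsLocalDiffeomorph (IN.prod IL) IM (⊤ : ℕ∞) S) :
    -- Σ is a complete solution (each σ_lam is a section of π solving the π-HJE) iff ...
    (∀ lam : Λ, (∀ n, π (S (n, lam)) = n) ∧
      ∀ n, mfderiv IN IM (fun n' => S (n', lam)) n
          (mfderiv IM IN π (S (n, lam)) (X (S (n, lam)))) = X (S (n, lam))) ↔
    ((∀ p : N × Λ, π (S p) = p.1) ∧
      ∀ p : N × Λ,
        mfderiv (IN.prod IL) IM S p
            ((mfderiv IM IN π (S p) (X (S p)), 0) :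
              TangentSpace IN p.1 × TangentSpace IL p.2) = X (S p)) := by
  have key : ∀ (n : N) (lam : Λ) (v : TangentSpace IN n),
      mfderiv IN IM (fun n' => S (n', lam)) n v
        = mfderiv (IN.prod IL) IM S (n, lam)
            ((v, 0) : TangentSpace IN n × TangentSpace IL lam) := by
    intro n lam v
    have hS : MDifferentiableAt (IN.prod IL) IM S (n, lam) :=
      (hSdiff.mdifferentiable (by simp)) (n, lam)
    have hincl : MDifferentiableAt IN (IN.prod IL) (fun n' : N => (n', lam)) n :=
      (mdifferentiableAt_id.prodMk mdifferentiableAt_const)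
    have := mfderiv_comp n hS hincl
    have h2 : mfderiv IN IM (fun n' => S (n', lam)) n
        = (mfderiv (IN.prod IL) IM S (n, lam)).comp
            (mfderiv IN (IN.prod IL) (fun n' : N => (n', lam)) n) := this
    rw [h2, mfderiv_prod_left]
    rfl
  constructor
  · rintro h
    refine ⟨fun p => (h p.2).1 p.1, fun p => ?_⟩
    obtain ⟨n, lam⟩ := p
    exact (key n lam _).symm.trans ((h lam).2 n)
  · rintro ⟨h1, h2⟩ lam
    refine ⟨fun n => h1 (n, lam), fun n => ?_⟩
    exact (key n lam _).trans (h2 (n, lam))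
end
end

section
/- Assume N is connected. (1) If Σ : N × Λ → M is a complete solution of the Π-HJE for (M, X_H) such that each partial map σ_λ := Σ(·,λ) is isotropic, then there exists a unique function h : Λ → ℝ such that H ∘ Σ = h ∘ p_Λ, i.e. H(Σ(n,λ)) = h(λ) for all (n,λ) ∈ N × Λ. (2) If Σ : N × Λ → M is a surjective local diffeomorphism such that each σ_λ is Lagrangian (i.e. both isotropic and co-isotropic), then Σ is a complete solution of the Π-HJE for (M, X_H) if and only if Π ∘ Σ = p_N and H ∘ Σ = h ∘ p_Λ for a (unique) function h : Λ → ℝ. -/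
open Manifold Set

noncomputable section


/-- A smooth function with everywhere-vanishing `mfderiv` on a preconnected boundaryless
manifold is constant. -/
lemma aux_const_of_mfderiv_zero
    {E HH M : Type*} [NormedAddCommGroup E] [NormedSpace ℝ E] [TopologicalSpace HH]
    [TopologicalSpace M] [ChartedSpace HH M] {I : ModelWithCorners ℝ E HH}
    [IsManifold I (⊤ : ℕ∞) M] [I.Boundaryless] [PreconnectedSpace M]
    {f : M → ℝ} (hf : MDifferentiable I 𝓘(ℝ, ℝ) f)
    (hf' : ∀ x, mfderiv I 𝓘(ℝ, ℝ) f x = 0) (a b : M) : f a = f b := by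
  have hlc : IsLocallyConstant f := by
    rw [IsLocallyConstant.iff_exists_open]
    intro x
    set e := extChartAt I x with he
    obtain ⟨ε, hε, hball⟩ := Metric.mem_nhds_iff.1 (extChartAt_target_mem_nhds (I := I) x)
    -- the composition with the inverse chart has zero derivative on the ball
    have hsymm : ∀ y ∈ Metric.ball (e x) ε, MDifferentiableAt 𝓘(ℝ, E) I e.symm y := by
      intro y hy
      have := mdifferentiableWithinAt_extChartAt_symm (x := x) (hball hy)
      rwa [I.range_eq_univ, mdifferentiableWithinAt_univ] at this
    have hgd : ∀ y ∈ Metric.ball (e x) ε,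
        MDifferentiableAt 𝓘(ℝ, E) 𝓘(ℝ, ℝ) (f ∘ e.symm) y := by
      intro y hy
      exact (hf _).comp y (hsymm y hy)
    have hconst : ∀ y ∈ Metric.ball (e x) ε, (f ∘ e.symm) y = (f ∘ e.symm) (e x) := by
      intro y hy
      refine (convex_ball _ _).is_const_of_fderivWithin_eq_zero
        (fun z hz => ((mdifferentiableAt_iff_differentiableAt).1
          (hgd z hz)).differentiableWithinAt) ?_ hy (Metric.mem_ball_self hε)
      intro z hz
      rw [fderivWithin_of_isOpen Metric.isOpen_ball hz, ← mfderiv_eq_fderiv,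
        mfderiv_comp z (hf _) (hsymm z hz), hf', ContinuousLinearMap.zero_comp]; rfl
    refine ⟨e.source ∩ e ⁻¹' Metric.ball (e x) ε, ?_, ?_, ?_⟩
    · exact (continuousOn_extChartAt x).isOpen_inter_preimage
        (isOpen_extChartAt_source x) Metric.isOpen_ball
    · exact ⟨mem_extChartAt_source x, Metric.mem_ball_self hε⟩
    · rintro x' ⟨hx's, hx'b⟩
      have h1 : f x' = (f ∘ e.symm) (e x') := by
        simp only [Function.comp_apply, e.left_inv hx's]
      rw [h1, hconst _ hx'b]
      simp only [Function.comp_apply, e.left_inv (mem_extChartAt_source x)]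
  exact hlc.apply_eq_of_preconnectedSpace a b

/-- On a Leibniz manifold, with `N` connected: (1) an isotropic complete solution `S` of the
`π`-Hamilton–Jacobi equation for `(M, X_H)` factors the Hamiltonian as `H ∘ S = h ∘ p_Λ` for a
unique `h : Λ → ℝ`;  (2) if each `σ_λ` is Lagrangian, a surjective local diffeomorphism `S` is
a complete solution iff `π ∘ S = p_N` and `H ∘ S = h ∘ p_Λ` for a unique `h : Λ → ℝ`. -/
theorem leibniz_complete_solution_hamiltonian_factorization
    {EM HM M EN HN N EL HL Λ : Type*}
    [NormedAddCommGroup EM] [NormedSpace ℝ EM] [TopologicalSpace HM]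
    [TopologicalSpace M] [ChartedSpace HM M]
    [NormedAddCommGroup EN] [NormedSpace ℝ EN] [TopologicalSpace HN]
    [TopologicalSpace N] [ChartedSpace HN N]
    [NormedAddCommGroup EL] [NormedSpace ℝ EL] [TopologicalSpace HL]
    [TopologicalSpace Λ] [ChartedSpace HL Λ]
    {IM : ModelWithCorners ℝ EM HM} {IN : ModelWithCorners ℝ EN HN}
    {IL : ModelWithCorners ℝ EL HL}
    [IsManifold IM (⊤ : ℕ∞) M] [IsManifold IN (⊤ : ℕ∞) N]
    [IsManifold IL (⊤ : ℕ∞) Λ]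
    [FiniteDimensional ℝ EM] [FiniteDimensional ℝ EN] [FiniteDimensional ℝ EL]
    [IM.Boundaryless] [IN.Boundaryless] [IL.Boundaryless]
    -- N is connected
    [ConnectedSpace N]
    -- dim Λ = dim M - dim N
    (hdim : Module.finrank ℝ EL = Module.finrank ℝ EM - Module.finrank ℝ EN)
    -- the fibration
    (π : M → N) (hπ : ContMDiff IM IN (⊤ : ℕ∞) π)
    (hπsurj : Function.Surjective π)
    (hπsub : ∀ m, Function.Surjective (mfderiv IM IN π m))
    -- the pointwise Leibniz structure Ξ and its musical maps Ξ♯, Ξ♯op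
    (Ξ : ∀ m : M, Module.Dual ℝ (TangentSpace IM m) →ₗ[ℝ]
      Module.Dual ℝ (TangentSpace IM m) →ₗ[ℝ] ℝ)
    (Ξs Ξop : ∀ m : M, Module.Dual ℝ (TangentSpace IM m) →ₗ[ℝ] TangentSpace IM m)
    (hΞs : ∀ (m : M) (α β : Module.Dual ℝ (TangentSpace IM m)), α (Ξs m β) = Ξ m α β)
    (hΞop : ∀ (m : M) (α β : Module.Dual ℝ (TangentSpace IM m)), α (Ξop m β) = - Ξ m β α)
    -- the Hamiltonian and its (smooth) Hamiltonian vector field X_H = Ξ♯(dH)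
    (H : M → ℝ) (hH : ContMDiff IM 𝓘(ℝ, ℝ) (⊤ : ℕ∞) H)
    (XH : ∀ m : M, TangentSpace IM m)
    (hXHsmooth : ContMDiff IM IM.tangent (⊤ : ℕ∞) (fun m => (⟨m, XH m⟩ : TangentBundle IM M)))
    (hXH : ∀ m : M, XH m = Ξs m (mfderiv IM 𝓘(ℝ, ℝ) H m).toLinearMap)
    -- S : N × Λ → M, a surjective local diffeomorphism
    (S : N × Λ → M)
    (hSsurj : Function.Surjective S)
    (hSdiff : IsLocalDiffeomorph (IN.prod IL) IM (⊤ : ℕ∞) S) :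
    -- (1): if S is a complete solution whose partial solutions are isotropic,
    -- then H ∘ S = h ∘ p_Λ for a unique h
    (((∀ lam : Λ, (∀ n, π (S (n, lam)) = n) ∧
        ∀ n, mfderiv IN IM (fun n' => S (n', lam)) n
            (mfderiv IM IN π (S (n, lam)) (XH (S (n, lam)))) = XH (S (n, lam))) ∧
      -- each σ_lam is isotropic: weakly isotropic and Im σ_* ⊆ Im Ξ♯op
      (∀ (lam : Λ) (n : N) (u : TangentSpace IM (S (n, lam))),
        u ∈ Set.range (mfderiv IN IM (fun n' => S (n', lam)) n) →
        u ∈ Set.range (Ξs (S (n, lam))) →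
        ∃ α : Module.Dual ℝ (TangentSpace IM (S (n, lam))),
          (∀ v ∈ Set.range (mfderiv IN IM (fun n' => S (n', lam)) n), α v = 0) ∧
          Ξs (S (n, lam)) α = u) ∧
      (∀ (lam : Λ) (n : N),
        Set.range (mfderiv IN IM (fun n' => S (n', lam)) n) ⊆
          Set.range (Ξop (S (n, lam))))) →
      ∃! h : Λ → ℝ, ∀ p : N × Λ, H (S p) = h p.2) ∧
    -- (2): if each σ_lam is Lagrangian (isotropic and co-isotropic), then S is a complete
    -- solution iff π ∘ S = p_N and H ∘ S = h ∘ p_Λ for a unique h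
    (((∀ (lam : Λ) (n : N) (u : TangentSpace IM (S (n, lam))),
        u ∈ Set.range (mfderiv IN IM (fun n' => S (n', lam)) n) →
        u ∈ Set.range (Ξs (S (n, lam))) →
        ∃ α : Module.Dual ℝ (TangentSpace IM (S (n, lam))),
          (∀ v ∈ Set.range (mfderiv IN IM (fun n' => S (n', lam)) n), α v = 0) ∧
          Ξs (S (n, lam)) α = u) ∧
      (∀ (lam : Λ) (n : N),
        Set.range (mfderiv IN IM (fun n' => S (n', lam)) n) ⊆
          Set.range (Ξop (S (n, lam)))) ∧
      (∀ (lam : Λ) (n : N) (α : Module.Dual ℝ (TangentSpace IM (S (n, lam)))),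
        (∀ v ∈ Set.range (mfderiv IN IM (fun n' => S (n', lam)) n), α v = 0) →
        Ξs (S (n, lam)) α ∈ Set.range (mfderiv IN IM (fun n' => S (n', lam)) n))) →
      ((∀ lam : Λ, (∀ n, π (S (n, lam)) = n) ∧
          ∀ n, mfderiv IN IM (fun n' => S (n', lam)) n
              (mfderiv IM IN π (S (n, lam)) (XH (S (n, lam)))) = XH (S (n, lam))) ↔
        ((∀ p : N × Λ, π (S p) = p.1) ∧ ∃! h : Λ → ℝ, ∀ p : N × Λ, H (S p) = h p.2))) := by
  
  classical
  obtain ⟨n₀⟩ : Nonempty N := inferInstance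
  have hS : ContMDiff (IN.prod IL) IM (⊤ : ℕ∞) S := hSdiff.contMDiff
  have hσ : ∀ lam : Λ, ContMDiff IN IM (⊤ : ℕ∞) (fun n' => S (n', lam)) := fun lam =>
    hS.comp (contMDiff_id.prodMk contMDiff_const)
  have hchain : ∀ (lam : Λ) (n : N),
      mfderiv IN 𝓘(ℝ, ℝ) (fun n' => H (S (n', lam))) n =
        (mfderiv IM 𝓘(ℝ, ℝ) H (S (n, lam))).comp
          (mfderiv IN IM (fun n' => S (n', lam)) n) := fun lam n =>
    mfderiv_comp (g := H) (f := fun n' => S (n', lam)) n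
      (hH.mdifferentiableAt (by simp)) ((hσ lam).mdifferentiableAt (by simp))
  have hzero : ∀ (lam : Λ) (n : N),
      (mfderiv IN IM (fun n' => S (n', lam)) n
        (mfderiv IM IN π (S (n, lam)) (XH (S (n, lam)))) = XH (S (n, lam))) →
      (∀ u : TangentSpace IM (S (n, lam)),
        u ∈ Set.range (mfderiv IN IM (fun n' => S (n', lam)) n) →
        u ∈ Set.range (Ξs (S (n, lam))) →
        ∃ α : Module.Dual ℝ (TangentSpace IM (S (n, lam))),
          (∀ v ∈ Set.range (mfderiv IN IM (fun n' => S (n', lam)) n), α v = 0) ∧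
          Ξs (S (n, lam)) α = u) →
      (Set.range (mfderiv IN IM (fun n' => S (n', lam)) n) ⊆
        Set.range (Ξop (S (n, lam)))) →
      mfderiv IN 𝓘(ℝ, ℝ) (fun n' => H (S (n', lam))) n = 0 := by
    intro lam n hje hwi hiso
    obtain ⟨α, hα0, hαX⟩ := hwi (XH (S (n, lam))) ⟨_, hje⟩ ⟨_, (hXH _).symm⟩
    ext v
    obtain ⟨β, hβ⟩ := hiso ⟨v, rfl⟩
    have e2 : (mfderiv IM 𝓘(ℝ, ℝ) H (S (n, lam)))
          (mfderiv IN IM (fun n' => S (n', lam)) n v) = 0 := by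
      calc (show ℝ from (mfderiv IM 𝓘(ℝ, ℝ) H (S (n, lam)))
            (mfderiv IN IM (fun n' => S (n', lam)) n v))
          = (show ℝ from (mfderiv IM 𝓘(ℝ, ℝ) H (S (n, lam))).toLinearMap
            (Ξop (S (n, lam)) β)) := by rw [hβ]; rfl
        _ = - Ξ (S (n, lam)) β (mfderiv IM 𝓘(ℝ, ℝ) H (S (n, lam))).toLinearMap :=
            hΞop _ _ β
        _ = - β (Ξs (S (n, lam)) (mfderiv IM 𝓘(ℝ, ℝ) H (S (n, lam))).toLinearMap) :=
            congrArg Neg.neg (hΞs _ β _).symm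
        _ = - β (Ξs (S (n, lam)) α) := by rw [← hXH, ← hαX]
        _ = - Ξ (S (n, lam)) β α := by rw [hΞs]
        _ = α (Ξop (S (n, lam)) β) := (hΞop _ α β).symm
        _ = 0 := by rw [hβ]; exact hα0 _ ⟨v, rfl⟩
    rw [hchain lam n]
    simpa using e2
  have keyEU : (∀ lam : Λ, ∀ n, mfderiv IN IM (fun n' => S (n', lam)) n
            (mfderiv IM IN π (S (n, lam)) (XH (S (n, lam)))) = XH (S (n, lam))) →
      (∀ (lam : Λ) (n : N) (u : TangentSpace IM (S (n, lam))),
        u ∈ Set.range (mfderiv IN IM (fun n' => S (n', lam)) n) →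
        u ∈ Set.range (Ξs (S (n, lam))) →
        ∃ α : Module.Dual ℝ (TangentSpace IM (S (n, lam))),
          (∀ v ∈ Set.range (mfderiv IN IM (fun n' => S (n', lam)) n), α v = 0) ∧
          Ξs (S (n, lam)) α = u) →
      (∀ (lam : Λ) (n : N),
        Set.range (mfderiv IN IM (fun n' => S (n', lam)) n) ⊆
          Set.range (Ξop (S (n, lam)))) →
      ∃! h : Λ → ℝ, ∀ p : N × Λ, H (S p) = h p.2 := by
    intro hsolA hwi hiso
    refine ⟨fun lam => H (S (n₀, lam)), ?_, ?_⟩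
    · rintro ⟨n, lam⟩
      exact aux_const_of_mfderiv_zero (f := fun n' => H (S (n', lam)))
        ((hH.comp (hσ lam)).mdifferentiable (by simp))
        (fun n' => hzero lam n' (hsolA lam n') (hwi lam n') (hiso lam n')) n n₀
    · intro h' hh'
      funext lam
      exact (hh' (n₀, lam)).symm
  refine ⟨fun ⟨hsol, hwi, hiso⟩ => keyEU (fun lam => (hsol lam).2) hwi hiso,
    fun ⟨hwi, hiso, hco⟩ => ⟨fun hsol => ⟨fun p => (hsol p.2).1 p.1,
      keyEU (fun lam => (hsol lam).2) hwi hiso⟩, ?_⟩⟩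
  rintro ⟨hπS, h, hh, -⟩ lam
  refine ⟨fun n => hπS (n, lam), fun n => ?_⟩
  have hσd : MDifferentiableAt IN IM (fun n' => S (n', lam)) n :=
    (hσ lam).mdifferentiableAt (by simp)
  have h0 : mfderiv IN 𝓘(ℝ, ℝ) (fun n' => H (S (n', lam))) n = 0 := by
    have hc : (fun n' => H (S (n', lam))) = fun _ => h lam := funext fun n' => hh (n', lam)
    rw [hc]; exact mfderiv_const
  have hc0 : (mfderiv IM 𝓘(ℝ, ℝ) H (S (n, lam))).comp
      (mfderiv IN IM (fun n' => S (n', lam)) n) = 0 := by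
    rw [← hchain lam n, h0]
  have hann : ∀ u ∈ Set.range (mfderiv IN IM (fun n' => S (n', lam)) n),
      (mfderiv IM 𝓘(ℝ, ℝ) H (S (n, lam))).toLinearMap u = 0 := by
    rintro u ⟨v, rfl⟩
    simpa using ContinuousLinearMap.ext_iff.1 hc0 v
  obtain ⟨w, hw⟩ := hco lam n (mfderiv IM 𝓘(ℝ, ℝ) H (S (n, lam))).toLinearMap hann
  have hXw : XH (S (n, lam)) = mfderiv IN IM (fun n' => S (n', lam)) n w := by
    rw [hXH]; exact hw.symm
  have hid : (mfderiv IM IN π (S (n, lam))).comp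
      (mfderiv IN IM (fun n' => S (n', lam)) n)
      = ContinuousLinearMap.id ℝ (TangentSpace IN n) := by
    rw [← mfderiv_comp (g := π) (f := fun n' => S (n', lam)) n
      (hπ.mdifferentiableAt (by simp)) hσd]
    have hc : (π ∘ fun n' => S (n', lam)) = id := funext fun n' => hπS (n', lam)
    rw [hc, mfderiv_id]
  have hπw : mfderiv IM IN π (S (n, lam)) (mfderiv IN IM (fun n' => S (n', lam)) n w)
      = w := by exact ContinuousLinearMap.ext_iff.1 hid w
  rw [hXw, hπw]
end
end

section
/- A surjective local diffeomorphism Σ : N × Λ → M is a complete solution of the Π-HJE for (M, X_H) if and only if Π ∘ Σ = p_N and d(H∘Σ) = i_{X_H^Σ} Σ*ω, i.e. for all (n,λ) ∈ N × Λ and all v ∈ T_{(n,λ)}(N × Λ): d(H∘Σ)_{(n,λ)}(v) = ω_{Σ(n,λ)}(Σ_{*,(n,λ)}(X_H^Σ(n,λ)), Σ_{*,(n,λ)}(v)), where X_H^Σ(n,λ) := (Π_{*,Σ(n,λ)}(X_H(Σ(n,λ))), 0). Moreover, in that case, for every λ ∈ Λ the partial solution σ_λ := Σ(·,λ) satisfies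 d(H∘σ_λ)_n(y) = ω_{σ_λ(n)}((σ_λ)_{*,n}(X_H^{σ_λ}(n)), (σ_λ)_{*,n}(y)) for all n ∈ N and y ∈ T_nN, with X_H^{σ_λ}(n) := Π_{*,σ_λ(n)}(X_H(σ_λ(n))). -/
open Manifold Set

noncomputable section

/-- The differential of a local diffeomorphism at a point is surjective. -/
lemma localdiffeo_mfderiv_surjective
    {𝕜 : Type*} [NontriviallyNormedField 𝕜]
    {E : Type*} [NormedAddCommGroup E] [NormedSpace 𝕜 E]
    {F : Type*} [NormedAddCommGroup F] [NormedSpace 𝕜 F]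
    {H : Type*} [TopologicalSpace H] {G : Type*} [TopologicalSpace G]
    {I : ModelWithCorners 𝕜 E H} {J : ModelWithCorners 𝕜 F G}
    {M : Type*} [TopologicalSpace M] [ChartedSpace H M]
    {N : Type*} [TopologicalSpace N] [ChartedSpace G N] {n : ℕ∞}
    {f : M → N} {x : M} (hf : IsLocalDiffeomorphAt I J n f x) (hn : 1 ≤ n) :
    Function.Surjective (mfderiv I J f x) := by
  obtain ⟨Φ, hx, heq⟩ := hf
  have hfΦ : mfderiv I J f x = mfderiv I J Φ x :=
    Filter.EventuallyEq.mfderiv_eq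
      (Filter.eventuallyEq_of_mem (Φ.open_source.mem_nhds hx) heq)
  have hΦx : Φ.symm (Φ x) = x := Φ.left_inv hx
  have hid : (Φ : M → N) ∘ (Φ.symm : N → M) =ᶠ[nhds (Φ x)] id :=
    Filter.eventuallyEq_of_mem (Φ.open_target.mem_nhds (Φ.map_source hx))
      fun y hy => Φ.right_inv hy
  have hdiff1 : MDifferentiableAt J I (Φ.symm : N → M) (Φ x) :=
    Φ.symm.mdifferentiableAt (by have := (zero_lt_one.trans_le hn).ne'; exact_mod_cast this) (Φ.map_source hx)
  have hdiff2 : MDifferentiableAt I J (Φ : M → N) (Φ.symm (Φ x)) := by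
    rw [hΦx]; exact Φ.mdifferentiableAt (by have := (zero_lt_one.trans_le hn).ne'; exact_mod_cast this) hx
  have hcomp := mfderiv_comp (I' := I) (Φ x) hdiff2 hdiff1
  rw [hid.mfderiv_eq, mfderiv_id] at hcomp
  have hpt : mfderiv I J (Φ : M → N) (Φ.symm (Φ x)) = mfderiv I J (Φ : M → N) x := by
    rw [hΦx]
  intro v
  refine ⟨mfderiv J I (Φ.symm : N → M) (Φ x) v, ?_⟩
  have hv := congrArg (fun L => L v) hcomp
  simp only [ContinuousLinearMap.coe_id', id_eq, ContinuousLinearMap.coe_comp',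
    Function.comp_apply] at hv
  rw [hfΦ, ← hpt]
  exact hv.symm

/-- On a symplectic manifold, a surjective local diffeomorphism `S : N × Λ → M` is a complete
solution of the `π`-Hamilton–Jacobi equation for `(M, X_H)` iff `π ∘ S = p_N` and
`d(H∘S) = i_{X_H^S} S*ω`; and in that case each partial solution `σ_λ` satisfies
`d(H∘σ_λ) = i_{X_H^{σ_λ}} σ_λ*ω`. -/
theorem symplectic_complete_solution_iff_contraction
    {EM HM M EN HN N EL HL Λ : Type*}
    [NormedAddCommGroup EM] [NormedSpace ℝ EM] [TopologicalSpace HM]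
    [TopologicalSpace M] [ChartedSpace HM M]
    [NormedAddCommGroup EN] [NormedSpace ℝ EN] [TopologicalSpace HN]
    [TopologicalSpace N] [ChartedSpace HN N]
    [NormedAddCommGroup EL] [NormedSpace ℝ EL] [TopologicalSpace HL]
    [TopologicalSpace Λ] [ChartedSpace HL Λ]
    {IM : ModelWithCorners ℝ EM HM} {IN : ModelWithCorners ℝ EN HN}
    {IL : ModelWithCorners ℝ EL HL}
    [IsManifold IM (⊤ : ℕ∞) M] [IsManifold IN (⊤ : ℕ∞) N]
    [IsManifold IL (⊤ : ℕ∞) Λ]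
    [FiniteDimensional ℝ EM] [FiniteDimensional ℝ EN] [FiniteDimensional ℝ EL]
    [IM.Boundaryless] [IN.Boundaryless] [IL.Boundaryless]
    -- dim Λ = dim M - dim N
    (hdim : Module.finrank ℝ EL = Module.finrank ℝ EM - Module.finrank ℝ EN)
    -- the fibration
    (π : M → N) (hπ : ContMDiff IM IN (⊤ : ℕ∞) π)
    (hπsurj : Function.Surjective π)
    (hπsub : ∀ m, Function.Surjective (mfderiv IM IN π m))
    -- the pointwise nondegenerate alternating bilinear form ω
    (ω : ∀ m : M, TangentSpace IM m →ₗ[ℝ] TangentSpace IM m →ₗ[ℝ] ℝ)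
    (hωalt : ∀ (m : M) (v : TangentSpace IM m), ω m v v = 0)
    (hωnd : ∀ (m : M) (v : TangentSpace IM m), (∀ w, ω m v w = 0) → v = 0)
    -- the Hamiltonian and its (smooth) Hamiltonian vector field
    (H : M → ℝ) (hH : ContMDiff IM 𝓘(ℝ, ℝ) (⊤ : ℕ∞) H)
    (XH : ∀ m : M, TangentSpace IM m)
    (hXHsmooth : ContMDiff IM IM.tangent (⊤ : ℕ∞) (fun m => (⟨m, XH m⟩ : TangentBundle IM M)))
    (hXH : ∀ (m : M) (v : TangentSpace IM m), ω m (XH m) v = mfderiv IM 𝓘(ℝ, ℝ) H m v)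
    -- S : N × Λ → M, a surjective local diffeomorphism
    (S : N × Λ → M)
    (hSsurj : Function.Surjective S)
    (hSdiff : IsLocalDiffeomorph (IN.prod IL) IM (⊤ : ℕ∞) S) :
    -- S is a complete solution iff π ∘ S = p_N and d(H∘S) = i_{X_H^S} S*ω ...
    ((∀ lam : Λ, (∀ n, π (S (n, lam)) = n) ∧
        ∀ n, mfderiv IN IM (fun n' => S (n', lam)) n
            (mfderiv IM IN π (S (n, lam)) (XH (S (n, lam)))) = XH (S (n, lam))) ↔
      ((∀ p : N × Λ, π (S p) = p.1) ∧
        ∀ (p : N × Λ) (v : TangentSpace (IN.prod IL) p),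
          mfderiv (IN.prod IL) 𝓘(ℝ, ℝ) (H ∘ S) p v =
            ω (S p)
              (mfderiv (IN.prod IL) IM S p
                ((mfderiv IM IN π (S p) (XH (S p)), 0) :
                  TangentSpace IN p.1 × TangentSpace IL p.2))
              (mfderiv (IN.prod IL) IM S p v))) ∧
    -- ... and in that case every partial solution satisfies d(H∘σ_λ) = i_{X_H^{σ_λ}} σ_λ*ω
    ((∀ lam : Λ, (∀ n, π (S (n, lam)) = n) ∧
        ∀ n, mfderiv IN IM (fun n' => S (n', lam)) n
            (mfderiv IM IN π (S (n, lam)) (XH (S (n, lam)))) = XH (S (n, lam))) →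
      ∀ (lam : Λ) (n : N) (y : TangentSpace IN n),
        mfderiv IN 𝓘(ℝ, ℝ) (H ∘ fun n' => S (n', lam)) n y =
          ω (S (n, lam))
            (mfderiv IN IM (fun n' => S (n', lam)) n
              (mfderiv IM IN π (S (n, lam)) (XH (S (n, lam)))))
            (mfderiv IN IM (fun n' => S (n', lam)) n y)) := by
  have hSmd : MDifferentiable (IN.prod IL) IM S := hSdiff.mdifferentiable (by simp)
  have hHmd : MDifferentiable IM 𝓘(ℝ, ℝ) H := hH.mdifferentiable (by simp)
  have factA : ∀ (lam : Λ) (nn : N) (u : TangentSpace IN nn),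
      mfderiv IN IM (fun n' => S (n', lam)) nn u =
        mfderiv (IN.prod IL) IM S (nn, lam)
          ((u, 0) : TangentSpace IN nn × TangentSpace IL lam) := by
    intro lam nn u
    have hincl : MDifferentiableAt IN (IN.prod IL) (fun n' => (n', lam)) nn :=
      mdifferentiableAt_id.prodMk mdifferentiableAt_const
    have h1 : mfderiv IN IM (S ∘ fun n' => (n', lam)) nn =
        (mfderiv (IN.prod IL) IM S (nn, lam)).comp
          (mfderiv IN (IN.prod IL) (fun n' => (n', lam)) nn) :=
      mfderiv_comp nn (hSmd (nn, lam)) hincl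
    have h2 : mfderiv IN (IN.prod IL) (fun n' => (n', lam)) nn =
        ContinuousLinearMap.inl ℝ (TangentSpace IN nn) (TangentSpace IL lam) :=
      mfderiv_prod_left
    show mfderiv IN IM (S ∘ fun n' => (n', lam)) nn u = _
    rw [h1, h2]
    rfl
  have factB : ∀ (p : N × Λ) (v : TangentSpace (IN.prod IL) p),
      mfderiv (IN.prod IL) 𝓘(ℝ, ℝ) (H ∘ S) p v =
        mfderiv IM 𝓘(ℝ, ℝ) H (S p) (mfderiv (IN.prod IL) IM S p v) := by
    intro p v
    rw [mfderiv_comp p (hHmd (S p)) (hSmd p)]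
    rfl
  constructor
  · constructor
    · rintro h
      refine ⟨fun p => (h p.2).1 p.1, ?_⟩
      rintro ⟨nn, lam⟩ v
      have hc : mfderiv (IN.prod IL) IM S (nn, lam)
          ((mfderiv IM IN π (S (nn, lam)) (XH (S (nn, lam))), 0) :
            TangentSpace IN nn × TangentSpace IL lam) = XH (S (nn, lam)) :=
        (factA lam nn _).symm.trans ((h lam).2 nn)
      rw [hc, hXH]
      exact factB _ v
    · rintro ⟨h1, h2⟩ lam
      refine ⟨fun nn => h1 (nn, lam), fun nn => ?_⟩
      refine (factA lam nn _).trans ?_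
      set u := mfderiv (IN.prod IL) IM S (nn, lam)
        ((mfderiv IM IN π (S (nn, lam)) (XH (S (nn, lam))), 0) :
          TangentSpace IN nn × TangentSpace IL lam) with hu
      have key : ∀ w : TangentSpace IM (S (nn, lam)),
          ω (S (nn, lam)) (u - XH (S (nn, lam))) w = 0 := by
        intro w
        obtain ⟨v, rfl⟩ := localdiffeo_mfderiv_surjective (hSdiff (nn, lam)) le_top w
        have e1 := h2 (nn, lam) v
        rw [factB, ← hXH] at e1
        rw [map_sub, LinearMap.sub_apply, sub_eq_zero]
        exact e1.symm
      have h0 := hωnd _ _ key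
      rwa [sub_eq_zero] at h0
  · intro h lam nn y
    have hσ : MDifferentiableAt IN IM (fun n' => S (n', lam)) nn :=
      (hSmd (nn, lam)).comp nn (mdifferentiableAt_id.prodMk mdifferentiableAt_const)
    rw [(h lam).2 nn, hXH, mfderiv_comp nn (hHmd _) hσ]
    rfl
end
end

section
/- Let Σ : N × Λ → M be a complete solution of the Π-HJE for (M,X). Then for every m ∈ M there exist an open neighborhood U ⊆ M of m and a smooth submersion F : U → Λ with F(U) ⊆ Λ open, such that: (i) X(u) ∈ Ker F_{*,u} for every u ∈ U; (ii) F is transverse to Π|_U, i.e. T_uU = Ker Π_{*,u} ⊕ Ker F_{*,u} for every u ∈ U; (iii) Σ(Π(U) × F(U)) ⊆ U; (iv) the restriction of Σ to Π(U) × F(U) is a diffeomorphism onto U; and (v) F(Σ(n,λ)) = λ for all (n,λ) ∈ Π(U) × F(U). -/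
open Manifold Set

noncomputable section

/-- From a complete solution `S : N × Λ → M` of the `π`-Hamilton–Jacobi equation for `(M, X)`
one obtains, around every point of `M`, a local momentum map: a submersion `F : U → Λ`,
transverse to `π`, whose kernel contains `X`, such that `S` restricts to a diffeomorphism of
`π(U) × F(U)` onto `U` with `F ∘ S = p_Λ`. -/
theorem local_momentum_map_from_complete_solution
    {EM HM M EN HN N EL HL Λ : Type*}
    [NormedAddCommGroup EM] [NormedSpace ℝ EM] [TopologicalSpace HM]
    [TopologicalSpace M] [ChartedSpace HM M]
    [NormedAddCommGroup EN] [NormedSpace ℝ EN] [TopologicalSpace HN]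
    [TopologicalSpace N] [ChartedSpace HN N]
    [NormedAddCommGroup EL] [NormedSpace ℝ EL] [TopologicalSpace HL]
    [TopologicalSpace Λ] [ChartedSpace HL Λ]
    {IM : ModelWithCorners ℝ EM HM} {IN : ModelWithCorners ℝ EN HN}
    {IL : ModelWithCorners ℝ EL HL}
    [IsManifold IM ((⊤ : ℕ∞) : WithTop ℕ∞) M] [IsManifold IN ((⊤ : ℕ∞) : WithTop ℕ∞) N]
    [IsManifold IL ((⊤ : ℕ∞) : WithTop ℕ∞) Λ]
    [FiniteDimensional ℝ EM] [FiniteDimensional ℝ EN] [FiniteDimensional ℝ EL]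
    [IM.Boundaryless] [IN.Boundaryless] [IL.Boundaryless]
    -- dim Λ = dim M - dim N
    (hdim : Module.finrank ℝ EL = Module.finrank ℝ EM - Module.finrank ℝ EN)
    -- the fibration
    (π : M → N) (hπ : ContMDiff IM IN (⊤ : ℕ∞) π)
    (hπsurj : Function.Surjective π)
    (hπsub : ∀ m, Function.Surjective (mfderiv IM IN π m))
    -- the (smooth) vector field X
    (X : ∀ m : M, TangentSpace IM m)
    (hX : ContMDiff IM IM.tangent (⊤ : ℕ∞) (fun m => (⟨m, X m⟩ : TangentBundle IM M)))
    -- S : N × Λ → M, a complete solution of the π-HJE for (M, X)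
    (S : N × Λ → M)
    (hSsurj : Function.Surjective S)
    (hSdiff : IsLocalDiffeomorph (IN.prod IL) IM (⊤ : ℕ∞) S)
    (hSsol : ∀ lam : Λ, (∀ n, π (S (n, lam)) = n) ∧
      ∀ n, mfderiv IN IM (fun n' => S (n', lam)) n
          (mfderiv IM IN π (S (n, lam)) (X (S (n, lam)))) = X (S (n, lam))) :
    ∀ m : M, ∃ (U : Set M) (F : M → Λ),
      IsOpen U ∧ m ∈ U ∧
      -- F is a smooth submersion on U with open image
      ContMDiffOn IM IL (⊤ : ℕ∞) F U ∧
      IsOpen (F '' U) ∧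
      (∀ u ∈ U, Function.Surjective (mfderiv IM IL F u)) ∧
      -- (i) X lies in the kernel of F_*
      (∀ u ∈ U, X u ∈
        LinearMap.ker (mfderiv IM IL F u : TangentSpace IM u →ₗ[ℝ] TangentSpace IL (F u))) ∧
      -- (ii) F is transverse to π on U
      (∀ u ∈ U,
        LinearMap.ker (mfderiv IM IN π u : TangentSpace IM u →ₗ[ℝ] TangentSpace IN (π u)) ⊓
          LinearMap.ker (mfderiv IM IL F u : TangentSpace IM u →ₗ[ℝ] TangentSpace IL (F u)) = ⊥ ∧
        LinearMap.ker (mfderiv IM IN π u : TangentSpace IM u →ₗ[ℝ] TangentSpace IN (π u)) ⊔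
          LinearMap.ker (mfderiv IM IL F u : TangentSpace IM u →ₗ[ℝ] TangentSpace IL (F u)) = ⊤) ∧
      -- (iii) S maps π(U) × F(U) into U
      Set.MapsTo S ((π '' U) ×ˢ (F '' U)) U ∧
      -- (iv) S restricted to π(U) × F(U) is a diffeomorphism onto U
      Set.BijOn S ((π '' U) ×ˢ (F '' U)) U ∧
      -- (v) F ∘ S = p_Λ on π(U) × F(U)
      (∀ p ∈ (π '' U) ×ˢ (F '' U), F (S p) = p.2) := by
  intro m
  obtain ⟨p₀, rfl⟩ := hSsurj m
  obtain ⟨Φ, hp₀, hEq⟩ := hSdiff p₀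
  obtain ⟨V, W, hV, hW, hn₀, hl₀, hVW⟩ :=
    isOpen_prod_iff.mp Φ.open_source p₀.1 p₀.2 hp₀
  have hKs : V ×ˢ W ⊆ Φ.source := hVW
  -- the open set and the momentum map
  set U : Set M := Φ '' (V ×ˢ W) with hUdef
  set F : M → Λ := fun u => (Φ.symm u).2 with hFdef
  -- basic facts
  have hli : ∀ q ∈ Φ.source, Φ.symm (Φ q) = q := fun q hq => Φ.toPartialEquiv.left_inv hq
  have hri : ∀ w ∈ Φ.target, Φ (Φ.symm w) = w := fun w hw => Φ.toPartialEquiv.right_inv hw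
  have hUt : U ⊆ Φ.target := by
    rintro u ⟨p, hp, rfl⟩
    exact Φ.toPartialEquiv.map_source (hKs hp)
  have hUopen : IsOpen U :=
    Φ.toOpenPartialHomeomorph.isOpen_image_of_subset_source (hV.prod hW) hKs
  have hπS : ∀ q : N × Λ, π (S q) = q.1 := fun q => (hSsol q.2).1 q.1
  have hπΦ : ∀ q ∈ Φ.source, π (Φ q) = q.1 := fun q hq => by
    rw [← hEq hq]; exact hπS q
  -- image identifications
  have hFΦ : ∀ q ∈ Φ.source, F (Φ q) = q.2 := fun q hq => by
    simp only [hFdef, hli q hq]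
  have hFU : F '' U = W := by
    apply Subset.antisymm
    · rintro _ ⟨u, ⟨p, hp, rfl⟩, rfl⟩
      rw [hFΦ p (hKs hp)]
      exact hp.2
    · intro w hw
      have hpW : (p₀.1, w) ∈ V ×ˢ W := ⟨hn₀, hw⟩
      exact ⟨Φ (p₀.1, w), ⟨(p₀.1, w), hpW, rfl⟩, hFΦ _ (hKs hpW)⟩
  have hπU : π '' U = V := by
    apply Subset.antisymm
    · rintro _ ⟨u, ⟨p, hp, rfl⟩, rfl⟩
      rw [hπΦ p (hKs hp)]
      exact hp.1
    · intro n hn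
      have hpV : (n, p₀.2) ∈ V ×ˢ W := ⟨hn, hl₀⟩
      exact ⟨Φ (n, p₀.2), ⟨(n, p₀.2), hpV, rfl⟩, hπΦ _ (hKs hpV)⟩
  -- differentiability of Φ and Φ.symm
  have hΦd : ∀ q ∈ Φ.source, MDifferentiableAt (IN.prod IL) IM Φ q := fun q hq =>
    Φ.mdifferentiableAt (by simp) hq
  have hψd : ∀ u ∈ Φ.target, MDifferentiableAt IM (IN.prod IL) Φ.symm u := fun u hu =>
    Φ.symm.mdifferentiableAt (by simp) hu
  -- the main pointwise derivative facts
  have main : ∀ p ∈ V ×ˢ W,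
      Function.Surjective (mfderiv IM IL F (Φ p)) ∧
      X (Φ p) ∈ LinearMap.ker (mfderiv IM IL F (Φ p) : TangentSpace IM (Φ p) →ₗ[ℝ] TangentSpace IL (F (Φ p))) ∧
      (LinearMap.ker (mfderiv IM IN π (Φ p) : TangentSpace IM (Φ p) →ₗ[ℝ] TangentSpace IN (π (Φ p))) ⊓ LinearMap.ker (mfderiv IM IL F (Φ p) : TangentSpace IM (Φ p) →ₗ[ℝ] TangentSpace IL (F (Φ p))) = ⊥ ∧
        LinearMap.ker (mfderiv IM IN π (Φ p) : TangentSpace IM (Φ p) →ₗ[ℝ] TangentSpace IN (π (Φ p))) ⊔ LinearMap.ker (mfderiv IM IL F (Φ p) : TangentSpace IM (Φ p) →ₗ[ℝ] TangentSpace IL (F (Φ p))) = ⊤) := by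
    rintro ⟨n, lam⟩ hp
    have hps : (n, lam) ∈ Φ.source := hKs hp
    have hut : Φ (n, lam) ∈ Φ.target := Φ.toPartialEquiv.map_source hps
    have hΦd' := hΦd _ hps
    have hψd' := hψd _ hut
    -- B ∘ A = id
    have hBA : ∀ v : TangentSpace (IN.prod IL) (n, lam),
        mfderiv IM (IN.prod IL) Φ.symm (Φ (n, lam))
          (mfderiv (IN.prod IL) IM Φ (n, lam) v) = v := by
      have hev : (⇑Φ.symm ∘ ⇑Φ) =ᶠ[nhds (n, lam)] id :=
        Filter.eventuallyEq_of_mem (Φ.open_source.mem_nhds hps) fun q hq => hli q hq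
      have h1 := hev.mfderiv_eq (I := IN.prod IL) (I' := IN.prod IL)
      rw [mfderiv_comp (n, lam) hψd' hΦd', mfderiv_id] at h1
      intro v
      exact ContinuousLinearMap.ext_iff.mp h1 v
    -- A ∘ B = id
    have eψ : Φ.symm (Φ (n, lam)) = (n, lam) := hli _ hps
    have hAB : ∀ x : TangentSpace IM (Φ (n, lam)),
        mfderiv (IN.prod IL) IM Φ (n, lam)
          (mfderiv IM (IN.prod IL) Φ.symm (Φ (n, lam)) x) = x := by
      have hev : (⇑Φ ∘ ⇑Φ.symm) =ᶠ[nhds (Φ (n, lam))] id :=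
        Filter.eventuallyEq_of_mem (Φ.open_target.mem_nhds hut) fun w hw => hri w hw
      have h1 := hev.mfderiv_eq (I := IM) (I' := IM)
      rw [mfderiv_comp (Φ (n, lam)) (by rw [eψ]; exact hΦd') hψd', eψ, mfderiv_id] at h1
      intro x
      exact ContinuousLinearMap.ext_iff.mp h1 x
    -- derivative of F
    have hFapp : ∀ x : TangentSpace IM (Φ (n, lam)),
        mfderiv IM IL F (Φ (n, lam)) x
          = (mfderiv IM (IN.prod IL) Φ.symm (Φ (n, lam)) x).2 := by
      have h1 : mfderiv IM IL F (Φ (n, lam))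
          = (mfderiv (IN.prod IL) IL Prod.snd (Φ.symm (Φ (n, lam)))).comp
            (mfderiv IM (IN.prod IL) Φ.symm (Φ (n, lam))) :=
        mfderiv_comp (Φ (n, lam)) mdifferentiableAt_snd hψd'
      rw [mfderiv_snd] at h1
      intro x
      rw [h1]
      rfl
    -- derivative of π
    have hπapp : ∀ x : TangentSpace IM (Φ (n, lam)),
        mfderiv IM IN π (Φ (n, lam)) x
          = (mfderiv IM (IN.prod IL) Φ.symm (Φ (n, lam)) x).1 := by
      have hev : π =ᶠ[nhds (Φ (n, lam))] (Prod.fst ∘ ⇑Φ.symm) := by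
        refine Filter.eventuallyEq_of_mem (Φ.open_target.mem_nhds hut) fun w hw => ?_
        have h1 : S (Φ.symm w) = w :=
          (hEq (Φ.toPartialEquiv.map_target hw)).trans (hri w hw)
        have h2 := hπS (Φ.symm w)
        rw [h1] at h2
        exact h2
      have h1 := hev.mfderiv_eq (I := IM) (I' := IN)
      rw [mfderiv_comp (Φ (n, lam)) mdifferentiableAt_fst hψd', mfderiv_fst] at h1
      intro x
      rw [h1]
      rfl
    -- the HJE gives: B (X u) = (dπ (X u), 0)
    have hXd : mfderiv IM (IN.prod IL) Φ.symm (Φ (n, lam)) (X (Φ (n, lam)))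
        = (mfderiv IM IN π (Φ (n, lam)) (X (Φ (n, lam))), 0) := by
      have hsol := (hSsol lam).2 n
      have hSp : S (n, lam) = Φ (n, lam) := hEq hps
      rw [hSp] at hsol
      -- derivative of the section n' ↦ S (n', lam)
      have hevσ : (fun n' => S (n', lam)) =ᶠ[nhds n] (⇑Φ ∘ fun n' => (n', lam)) := by
        have hopen : IsOpen ((fun n' => ((n', lam) : N × Λ)) ⁻¹' Φ.source) :=
          Φ.open_source.preimage (continuous_id.prodMk continuous_const)
        exact Filter.eventuallyEq_of_mem (hopen.mem_nhds hps) fun n' hn' => hEq hn'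
      have hσ := hevσ.mfderiv_eq (I := IN) (I' := IM)
      have hι : MDifferentiableAt IN (IN.prod IL) (fun n' => ((n', lam) : N × Λ)) n :=
        mdifferentiableAt_id.prodMk mdifferentiableAt_const
      rw [mfderiv_comp n hΦd' hι, mfderiv_prod_left] at hσ
      rw [hσ] at hsol
      have hB := hBA ((mfderiv IM IN π (Φ (n, lam)) (X (Φ (n, lam))), 0))
      have hXA : X (Φ (n, lam)) = mfderiv (IN.prod IL) IM Φ (n, lam)
          (mfderiv IM IN π (Φ (n, lam)) (X (Φ (n, lam))), 0) := by
        conv_lhs => rw [← hsol]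
        rfl
      conv_lhs => rw [hXA]
      exact hB
    refine ⟨?_, ?_, ?_, ?_⟩
    · -- surjectivity of dF
      intro w
      refine ⟨mfderiv (IN.prod IL) IM Φ (n, lam) (0, w), ?_⟩
      rw [hFapp]; exact congrArg Prod.snd (hBA (0, w))
    · -- X in the kernel of dF
      refine LinearMap.mem_ker.mpr ?_
      show mfderiv IM IL F (Φ (n, lam)) (X (Φ (n, lam))) = 0
      rw [hFapp, hXd]; rfl
    · -- trivial intersection
      rw [Submodule.eq_bot_iff]
      intro x hx
      obtain ⟨hx1, hx2⟩ := Submodule.mem_inf.mp hx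
      have hx1' : mfderiv IM IN π (Φ (n, lam)) x = 0 := LinearMap.mem_ker.mp hx1
      have hx2' : mfderiv IM IL F (Φ (n, lam)) x = 0 := LinearMap.mem_ker.mp hx2
      rw [hπapp] at hx1'
      rw [hFapp] at hx2'
      have hB0 : mfderiv IM (IN.prod IL) Φ.symm (Φ (n, lam)) x = 0 := Prod.ext hx1' hx2'
      have := hAB x
      rw [hB0] at this
      exact this.symm.trans (map_zero _)
    · -- spanning
      rw [Submodule.eq_top_iff']
      intro x
      set y := mfderiv IM (IN.prod IL) Φ.symm (Φ (n, lam)) x with hy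
      have h1 : mfderiv IM IN π (Φ (n, lam))
          (mfderiv (IN.prod IL) IM Φ (n, lam) (0, y.2)) = 0 := by
        rw [hπapp]; exact congrArg Prod.fst (hBA (0, y.2))
      have h2 : mfderiv IM IL F (Φ (n, lam))
          (mfderiv (IN.prod IL) IM Φ (n, lam) (y.1, 0)) = 0 := by
        rw [hFapp]; exact congrArg Prod.snd (hBA (y.1, 0))
      refine Submodule.mem_sup.mpr
        ⟨mfderiv (IN.prod IL) IM Φ (n, lam) (0, y.2), LinearMap.mem_ker.mpr h1,
         mfderiv (IN.prod IL) IM Φ (n, lam) (y.1, 0), LinearMap.mem_ker.mpr h2, ?_⟩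
      have hadd : ((0, y.2) : TangentSpace (IN.prod IL) (n, lam))
          + ((y.1, 0) : TangentSpace (IN.prod IL) (n, lam)) = y := by
        show ((0, y.2) + (y.1, 0) : EN × EL) = y
        rw [Prod.mk_add_mk, zero_add, add_zero]
        exact rfl
      calc mfderiv (IN.prod IL) IM Φ (n, lam) (0, y.2)
            + mfderiv (IN.prod IL) IM Φ (n, lam) (y.1, 0)
          = mfderiv (IN.prod IL) IM Φ (n, lam) ((0, y.2) + (y.1, 0)) :=
            ((mfderiv (IN.prod IL) IM Φ (n, lam)).map_add _ _).symm
        _ = mfderiv (IN.prod IL) IM Φ (n, lam) y := by exact congrArg _ hadd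
        _ = x := by rw [hy]; exact hAB x
  -- assemble the answer
  refine ⟨U, F, hUopen, ?_, ?_, ?_, ?_, ?_, ?_, ?_, ?_, ?_⟩
  · -- m ∈ U
    exact ⟨p₀, ⟨hn₀, hl₀⟩, (hEq hp₀).symm⟩
  · -- smoothness of F on U
    exact (contMDiff_snd.comp_contMDiffOn Φ.symm.contMDiffOn).mono hUt
  · -- open image
    rw [hFU]; exact hW
  · rintro u ⟨p, hp, rfl⟩
    exact (main p hp).1
  · rintro u ⟨p, hp, rfl⟩
    exact (main p hp).2.1
  · rintro u ⟨p, hp, rfl⟩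
    exact (main p hp).2.2
  · -- MapsTo
    rw [hπU, hFU]
    rintro ⟨n, lam⟩ ⟨hn, hlam⟩
    have hps : (n, lam) ∈ V ×ˢ W := ⟨hn, hlam⟩
    show S (n, lam) ∈ U
    rw [hEq (hKs hps)]
    exact mem_image_of_mem _ hps
  · -- BijOn
    rw [hπU, hFU]
    refine ⟨?_, ?_, ?_⟩
    · rintro ⟨n, lam⟩ ⟨hn, hlam⟩
      have hps : (n, lam) ∈ V ×ˢ W := ⟨hn, hlam⟩
      show S (n, lam) ∈ U
      rw [hEq (hKs hps)]
      exact mem_image_of_mem _ hps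
    · intro a ha b hb hab
      refine Φ.toPartialEquiv.injOn (hKs ha) (hKs hb) ?_
      rw [← hEq (hKs ha), ← hEq (hKs hb)]
      exact hab
    · rintro u ⟨p, hp, rfl⟩
      exact ⟨p, hp, hEq (hKs hp)⟩
  · -- F ∘ S = projection
    rw [hπU, hFU]
    rintro ⟨n, lam⟩ ⟨hn, hlam⟩
    have hps : (n, lam) ∈ Φ.source := hKs ⟨hn, hlam⟩
    show F (S (n, lam)) = lam
    rw [hEq hps]
    exact hFΦ _ hps
end
end

section
/- Let d := dim M, let Λ be a smooth l-dimensional manifold with l ≤ d, and let F : M → Λ be a fibration such that X(m) ∈ Ker F_{*,m} for every m ∈ M. Then for every m ∈ M there exist an open neighborhood U ⊆ M of m and a smooth submersion π : U → π(U) ⊆ ℝ^{d−l} with π(U) open, such that (π, F|_U) : U → π(U) × F(U) is a diffeomorphism and Σ := (π, F|_U)^{-1} is a complete solution of the π-HJE for (U, X|_U); moreover F(Σ(n,λ)) = λ for all (n,λ) ∈ π(U) × F(U). -/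
open Manifold Set

noncomputable section
set_option maxHeartbeats 1000000

/-- From a fibration `F : M → Λ` of first integrals of `X` one obtains, around every point of
`M`, a submersion `π : U → ℝ^{d-l}` transverse to `F` such that the inverse `S` of `(π, F)|_U`
is a complete solution of the `π`-Hamilton–Jacobi equation for `(U, X|_U)`, with
`F ∘ S = p_Λ`. -/
theorem local_complete_solution_from_first_integrals_no_fibration
    {EM HM M EL HL Λ : Type*}
    [NormedAddCommGroup EM] [NormedSpace ℝ EM] [TopologicalSpace HM]
    [TopologicalSpace M] [ChartedSpace HM M]
    [NormedAddCommGroup EL] [NormedSpace ℝ EL] [TopologicalSpace HL]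
    [TopologicalSpace Λ] [ChartedSpace HL Λ]
    {IM : ModelWithCorners ℝ EM HM} {IL : ModelWithCorners ℝ EL HL}
    [IsManifold IM (⊤ : ℕ∞) M] [IsManifold IL (⊤ : ℕ∞) Λ]
    [FiniteDimensional ℝ EM] [FiniteDimensional ℝ EL]
    [IM.Boundaryless] [IL.Boundaryless]
    -- dimensions: dim M = d, dim Λ = l ≤ d
    {d l : ℕ}
    (hd : Module.finrank ℝ EM = d) (hl : Module.finrank ℝ EL = l) (hld : l ≤ d)
    -- the (smooth) vector field X
    (X : ∀ m : M, TangentSpace IM m)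
    (hX : ContMDiff IM IM.tangent (⊤ : ℕ∞) (fun m => (⟨m, X m⟩ : TangentBundle IM M)))
    -- the fibration F : M → Λ of first integrals of X
    (F : M → Λ) (hF : ContMDiff IM IL (⊤ : ℕ∞) F)
    (hFsurj : Function.Surjective F)
    (hFsub : ∀ m, Function.Surjective (mfderiv IM IL F m))
    (hker : ∀ m, X m ∈ LinearMap.ker (mfderiv IM IL F m).toLinearMap) :
    ∀ m : M, ∃ (U : Set M) (π : M → EuclideanSpace ℝ (Fin (d - l))),
      IsOpen U ∧ m ∈ U ∧
      -- π is a smooth submersion on U with open image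
      ContMDiffOn IM 𝓘(ℝ, EuclideanSpace ℝ (Fin (d - l))) (⊤ : ℕ∞) π U ∧
      IsOpen (π '' U) ∧ IsOpen (F '' U) ∧
      (∀ u ∈ U, Function.Surjective (mfderiv IM 𝓘(ℝ, EuclideanSpace ℝ (Fin (d - l))) π u)) ∧
      -- (π, F)|_U is a diffeomorphism onto π(U) × F(U)
      Set.BijOn (fun u => (π u, F u)) U ((π '' U) ×ˢ (F '' U)) ∧
      ∃ S : EuclideanSpace ℝ (Fin (d - l)) × Λ → M,
        -- S is the inverse of (π, F)|_U
        (∀ u ∈ U, S (π u, F u) = u) ∧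
        (∀ p ∈ (π '' U) ×ˢ (F '' U), (π (S p), F (S p)) = p) ∧
        Set.MapsTo S ((π '' U) ×ˢ (F '' U)) U ∧
        Set.SurjOn S ((π '' U) ×ˢ (F '' U)) U ∧
        -- S is smooth (a local diffeomorphism) on π(U) × F(U)
        ContMDiffOn ((𝓘(ℝ, EuclideanSpace ℝ (Fin (d - l)))).prod IL) IM (⊤ : ℕ∞) S
          ((π '' U) ×ˢ (F '' U)) ∧
        IsLocalDiffeomorphOn ((𝓘(ℝ, EuclideanSpace ℝ (Fin (d - l)))).prod IL) IM (⊤ : ℕ∞) S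
          ((π '' U) ×ˢ (F '' U)) ∧
        -- each partial map σ_λ is a section of π|_U solving the π|_U-HJE for (U, X|_U)
        (∀ lam ∈ F '' U, ∀ n ∈ π '' U,
          π (S (n, lam)) = n ∧
          mfderiv 𝓘(ℝ, EuclideanSpace ℝ (Fin (d - l))) IM (fun n' => S (n', lam)) n
              (mfderiv IM 𝓘(ℝ, EuclideanSpace ℝ (Fin (d - l))) π (S (n, lam))
                (X (S (n, lam)))) = X (S (n, lam))) ∧
        -- F is the global momentum map related to S
        (∀ p ∈ (π '' U) ×ˢ (F '' U), F (S p) = p.2) := by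
  intro m₀
  -- Notation
  set c : PartialEquiv M EM := extChartAt IM m₀ with hc_def
  set e : PartialEquiv Λ EL := extChartAt IL (F m₀) with he_def
  have hm₀c : m₀ ∈ c.source := mem_extChartAt_source m₀
  have hFm₀e : F m₀ ∈ e.source := mem_extChartAt_source (F m₀)
  have hm₀chart : m₀ ∈ (chartAt HM m₀).source := by
    rw [← extChartAt_source IM]; exact hm₀c
  have hFm₀chart : F m₀ ∈ (chartAt HL (F m₀)).source := by
    rw [← extChartAt_source IL]; exact hFm₀e
  set x₀ : EM := c m₀ with hx₀
  have hx₀target : x₀ ∈ c.target := c.map_source hm₀c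
  have hcsymm_x₀ : c.symm x₀ = m₀ := c.left_inv hm₀c
  have hrangeM : range (IM : HM → EM) = univ := IM.range_eq_univ
  have hrangeL : range (IL : HL → EL) = univ := IL.range_eq_univ
  -- the second component map, on the chart side
  set f₂ : EM → EL := fun x => e (F (c.symm x)) with hf₂
  set O : Set EM := c.target ∩ c.symm ⁻¹' (F ⁻¹' e.source) with hO_def
  have hOsub : O ⊆ c.target := inter_subset_left
  have hOopen : IsOpen O := by
    apply (continuousOn_extChartAt_symm m₀).isOpen_inter_preimage (isOpen_extChartAt_target m₀)
    exact (hF.continuous.isOpen_preimage _ (isOpen_extChartAt_source (F m₀)))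
  have hx₀O : x₀ ∈ O := by
    refine ⟨hx₀target, ?_⟩
    simp only [mem_preimage, hcsymm_x₀]
    exact hFm₀e
  -- smoothness of f₂ on O
  have hf₂smooth : ContMDiffOn 𝓘(ℝ, EM) 𝓘(ℝ, EL) (⊤ : ℕ∞) f₂ O := by
    have h1 : ContMDiffOn 𝓘(ℝ, EM) IM (⊤ : ℕ∞) c.symm c.target := contMDiffOn_extChartAt_symm m₀
    have h2 : ContMDiffOn IL 𝓘(ℝ, EL) (⊤ : ℕ∞) e e.source := by
      have := contMDiffOn_extChartAt (n := (⊤ : ℕ∞)) (I := IL) (x := F m₀)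
      rwa [← extChartAt_source IL] at this
    have h3 : ContMDiffOn IM 𝓘(ℝ, EL) (⊤ : ℕ∞) (fun m => e (F m)) (F ⁻¹' e.source) :=
      h2.comp hF.contMDiffOn (fun x hx => hx)
    exact h3.comp (h1.mono hOsub) (fun x hx => hx.2)
  have hf₂cd := hf₂smooth.contDiffOn
  -- derivatives of the charts
  have hdiffcsymm : MDifferentiableAt 𝓘(ℝ, EM) IM c.symm x₀ := by
    have := mdifferentiableWithinAt_extChartAt_symm (I := IM) (x := m₀) hx₀target
    rwa [hrangeM, mdifferentiableWithinAt_univ] at this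
  set A : EM →L[ℝ] EM := mfderiv 𝓘(ℝ, EM) IM c.symm x₀ with hA_def
  have hcA : A.comp (mfderiv IM 𝓘(ℝ, EM) c m₀) = ContinuousLinearMap.id ℝ EM := by
    have h := mfderivWithin_extChartAt_symm_comp_mfderiv_extChartAt' (I := IM) hm₀c
    rwa [hrangeM, mfderivWithin_univ] at h
  have hAsurj : Function.Surjective A := by
    intro v
    exact ⟨mfderiv IM 𝓘(ℝ, EM) c m₀ v, by
      have := congrArg (fun (T : EM →L[ℝ] EM) => T v) hcA
      exact this⟩
  set D : EM →L[ℝ] EL := mfderiv IM IL F m₀ with hD_def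
  set B : EL →L[ℝ] EL := mfderiv IL 𝓘(ℝ, EL) e (F m₀) with hB_def
  have hBsurj : Function.Surjective B := by
    have h := mfderiv_extChartAt_comp_mfderivWithin_extChartAt_symm' (I := IL) hFm₀e
    rw [hrangeL, mfderivWithin_univ] at h
    intro v
    exact ⟨mfderiv 𝓘(ℝ, EL) IL e.symm (e (F m₀)) v, by
      have := congrArg (fun (T : EL →L[ℝ] EL) => T v) h
      exact this⟩
  -- HasFDerivAt of f₂ at x₀
  set D₂ : EM →L[ℝ] EL := B.comp (D.comp A) with hD₂_def
  have hD₂deriv : HasFDerivAt f₂ D₂ x₀ := by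
    have hA' : HasMFDerivAt 𝓘(ℝ, EM) IM c.symm x₀ A := hdiffcsymm.hasMFDerivAt
    have hD' : HasMFDerivAt IM IL F (c.symm x₀) D := by
      rw [hcsymm_x₀]; exact (hF m₀).mdifferentiableAt (by simp) |>.hasMFDerivAt
    have hB' : HasMFDerivAt IL 𝓘(ℝ, EL) e (F (c.symm x₀)) B := by
      rw [hcsymm_x₀]; exact (mdifferentiableAt_extChartAt hFm₀chart).hasMFDerivAt
    have hcomp : HasMFDerivAt 𝓘(ℝ, EM) 𝓘(ℝ, EL) (e ∘ (F ∘ c.symm)) x₀ (B.comp (D.comp A)) :=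
      HasMFDerivAt.comp x₀ hB' (HasMFDerivAt.comp x₀ hD' hA')
    have : HasMFDerivAt 𝓘(ℝ, EM) 𝓘(ℝ, EL) f₂ x₀ D₂ := hcomp
    exact hasMFDerivAt_iff_hasFDerivAt.mp this
  have hD₂surj : Function.Surjective D₂ := by
    have : (D₂ : EM → EL) = B ∘ (D ∘ A) := rfl
    rw [this]
    exact hBsurj.comp ((hFsub m₀).comp hAsurj)
  -- the kernel of D₂ and the projection
  set K : Submodule ℝ EM := LinearMap.ker (D₂ : EM →ₗ[ℝ] EL) with hK_def
  have hKrank : Module.finrank ℝ K = d - l := by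
    have h1 := LinearMap.finrank_range_add_finrank_ker (D₂ : EM →ₗ[ℝ] EL)
    have h2 : LinearMap.range (D₂ : EM →ₗ[ℝ] EL) = ⊤ := LinearMap.range_eq_top.2 hD₂surj
    rw [h2, finrank_top, hl, hd] at h1
    have : LinearMap.ker (D₂ : EM →ₗ[ℝ] EL) = K := rfl
    rw [this] at h1
    omega
  obtain ⟨P, hP⟩ := Submodule.ClosedComplemented.of_finiteDimensional K
  set ψ : K ≃L[ℝ] EuclideanSpace ℝ (Fin (d - l)) := ContinuousLinearEquiv.ofFinrankEq (by
    rw [hKrank, finrank_euclideanSpace_fin]) with hψ_def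
  set ψP : EM →L[ℝ] EuclideanSpace ℝ (Fin (d - l)) := (ψ : K →L[ℝ] EuclideanSpace ℝ (Fin (d - l))).comp P with hψP_def
  have hψPsurj : Function.Surjective ψP := by
    intro z
    refine ⟨(ψ.symm z : K), ?_⟩
    have : P ((ψ.symm z : K) : EM) = ψ.symm z := hP (ψ.symm z)
    simp [hψP_def, this]
  -- the full derivative at x₀ and its bijectivity
  set T : EM →L[ℝ] EuclideanSpace ℝ (Fin (d - l)) × EL := ψP.prod D₂ with hT_def
  have hTinj : Function.Injective T := by
    rw [injective_iff_map_eq_zero]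
    intro x hx
    have h1 : ψP x = 0 := congrArg Prod.fst hx
    have h2 : D₂ x = 0 := congrArg Prod.snd hx
    have hxK : x ∈ K := h2
    have h3 : P x = ⟨x, hxK⟩ := hP ⟨x, hxK⟩
    have h4 : ψ (P x) = 0 := h1
    rw [h3] at h4
    have h5 : (⟨x, hxK⟩ : K) = 0 := by
      apply ψ.injective; simpa using h4
    exact congrArg Subtype.val h5
  have hTsurj : Function.Surjective T := by
    have hfr : Module.finrank ℝ EM = Module.finrank ℝ (EuclideanSpace ℝ (Fin (d - l)) × EL) := by
      rw [Module.finrank_prod, finrank_euclideanSpace_fin, hd, hl]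
      omega
    exact (LinearMap.injective_iff_surjective_of_finrank_eq_finrank (f := (T : EM →ₗ[ℝ] EuclideanSpace ℝ (Fin (d - l)) × EL)) hfr).1 hTinj
  set T' : EM ≃L[ℝ] EuclideanSpace ℝ (Fin (d - l)) × EL :=
    (LinearEquiv.ofBijective (T : EM →ₗ[ℝ] EuclideanSpace ℝ (Fin (d - l)) × EL) ⟨hTinj, hTsurj⟩).toContinuousLinearEquiv with hT'_def
  have hT'coe : (T' : EM →L[ℝ] EuclideanSpace ℝ (Fin (d - l)) × EL) = T := by
    ext x <;> rfl
  -- the chart-side map h and its smoothness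
  set h : EM → EuclideanSpace ℝ (Fin (d - l)) × EL := fun x => (ψP x, f₂ x) with hh_def
  have hhcd : ContDiffOn ℝ ((⊤ : ℕ∞) : WithTop ℕ∞) h O :=
    ((ψP.contDiff.of_le le_top).contDiffOn.mono (subset_univ O)).prodMk hf₂cd
  have hhT : HasFDerivAt h ((T' : EM →L[ℝ] EuclideanSpace ℝ (Fin (d - l)) × EL)) x₀ := by
    rw [hT'coe]
    exact (ψP.hasFDerivAt).prodMk hD₂deriv
  have hone : (1 : WithTop ℕ∞) ≤ ((⊤ : ℕ∞) : WithTop ℕ∞) := by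
    exact_mod_cast le_top
  -- the set where the derivative of h is invertible
  set O' : Set EM := O ∩ (fderiv ℝ h) ⁻¹'
      (range ((↑) : (EM ≃L[ℝ] EuclideanSpace ℝ (Fin (d - l)) × EL) →
        (EM →L[ℝ] EuclideanSpace ℝ (Fin (d - l)) × EL))) with hO'_def
  have hO'open : IsOpen O' :=
    (hhcd.continuousOn_fderiv_of_isOpen hOopen hone).isOpen_inter_preimage hOopen
      ContinuousLinearEquiv.isOpen
  have hO'sub : O' ⊆ O := inter_subset_left
  have hx₀O' : x₀ ∈ O' := by
    refine ⟨hx₀O, ?_⟩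
    simp only [mem_preimage, hhT.fderiv]
    exact mem_range_self _
  have hhdiffat : ∀ x ∈ O, ContDiffAt ℝ ((⊤ : ℕ∞) : WithTop ℕ∞) h x := fun x hx =>
    hhcd.contDiffAt (hOopen.mem_nhds hx)
  -- inverse function theorem
  set Φ₀ : OpenPartialHomeomorph EM (EuclideanSpace ℝ (Fin (d - l)) × EL) :=
    (hhdiffat x₀ hx₀O).toOpenPartialHomeomorph h hhT (by simp) with hΦ₀_def
  have hΦ₀coe : ⇑Φ₀ = h := rfl
  have hx₀Φ₀ : x₀ ∈ Φ₀.source :=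
    (hhdiffat x₀ hx₀O).mem_toOpenPartialHomeomorph_source hhT (by simp)
  set Φ : OpenPartialHomeomorph EM (EuclideanSpace ℝ (Fin (d - l)) × EL) :=
    Φ₀.restrOpen O' hO'open with hΦ_def
  have hΦcoe : ⇑Φ = h := rfl
  have hΦsymm_coe : ⇑Φ.symm = ⇑Φ₀.symm := rfl
  have hΦsource : Φ.source = Φ₀.source ∩ O' := Φ₀.restrOpen_source O' hO'open
  have hx₀Φ : x₀ ∈ Φ.source := by rw [hΦsource]; exact ⟨hx₀Φ₀, hx₀O'⟩
  have hΦsubO' : Φ.source ⊆ O' := by rw [hΦsource]; exact inter_subset_right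
  have hΦsubO : Φ.source ⊆ O := fun x hx => hO'sub (hΦsubO' hx)
  have hΦsubtarget : Φ.source ⊆ c.target := fun x hx => hOsub (hΦsubO hx)
  -- smoothness of the inverse of Φ on its target
  have hΦsymm_cd : ContDiffOn ℝ ((⊤ : ℕ∞) : WithTop ℕ∞) Φ.symm Φ.target := by
    intro y hy
    have hsy : Φ.symm y ∈ Φ.source := Φ.map_target hy
    obtain ⟨ex, hex⟩ := (hΦsubO' hsy).2
    have hder : HasFDerivAt (⇑Φ) ((ex : EM →L[ℝ] EuclideanSpace ℝ (Fin (d - l)) × EL)) (Φ.symm y) := by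
      rw [hΦcoe, hex]
      exact ((hhdiffat _ (hΦsubO hsy)).differentiableAt (by simp)).hasFDerivAt
    have hcd : ContDiffAt ℝ ((⊤ : ℕ∞) : WithTop ℕ∞) (⇑Φ) (Φ.symm y) := by
      rw [hΦcoe]; exact hhdiffat _ (hΦsubO hsy)
    exact (Φ.contDiffAt_symm hy hder hcd).contDiffWithinAt
  -- choose a product box inside Φ.target with second factor inside e.target
  have hz₀mem : Φ x₀ ∈ Φ.target ∩ (univ ×ˢ e.target) := by
    refine ⟨Φ.map_source hx₀Φ, mem_univ _, ?_⟩
    show (h x₀).2 ∈ e.target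
    have : (h x₀).2 = e (F (c.symm x₀)) := rfl
    rw [this, hcsymm_x₀]
    exact e.map_source hFm₀e
  have hz₀open : IsOpen (Φ.target ∩ (univ ×ˢ e.target)) :=
    Φ.open_target.inter (isOpen_univ.prod (isOpen_extChartAt_target (F m₀)))
  obtain ⟨V₁, V₂, hV₁open, hV₂open, hV₁mem, hV₂mem, hVsub⟩ :=
    isOpen_prod_iff.mp hz₀open (Φ x₀).1 (Φ x₀).2 (by simpa using hz₀mem)
  have hboxsub : V₁ ×ˢ V₂ ⊆ Φ.target := fun z hz => (hVsub hz).1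
  have hV₂target : V₂ ⊆ e.target := fun y hy =>
    (hVsub (show ((Φ x₀).1, y) ∈ V₁ ×ˢ V₂ from ⟨hV₁mem, hy⟩)).2.2
  -- the sets W and U
  set W : Set EM := Φ.source ∩ ⇑Φ ⁻¹' (V₁ ×ˢ V₂) with hW_def
  have hWopen : IsOpen W := Φ.isOpen_inter_preimage (hV₁open.prod hV₂open)
  have hWsub : W ⊆ Φ.source := inter_subset_left
  set U : Set M := c.source ∩ ⇑c ⁻¹' W with hU_def
  have hUopen : IsOpen U := by
    exact (continuousOn_extChartAt (I := IM) m₀).isOpen_inter_preimage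
      (isOpen_extChartAt_source m₀) hWopen
  have hUsubsource : U ⊆ c.source := inter_subset_left
  have hx₀W : x₀ ∈ W := ⟨hx₀Φ, by
    simp only [mem_preimage]
    exact ⟨hV₁mem, hV₂mem⟩⟩
  have hm₀U : m₀ ∈ U := ⟨hm₀c, hx₀W⟩
  -- the submersion π and the inverse map S
  set π : M → EuclideanSpace ℝ (Fin (d - l)) := fun u => ψP (c u) with hπ_def
  set S : EuclideanSpace ℝ (Fin (d - l)) × Λ → M := fun p => c.symm (Φ.symm (p.1, e p.2))
    with hS_def
  -- basic pointwise facts on U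
  have hUmem : ∀ u ∈ U, u ∈ c.source ∧ c u ∈ W := fun u hu => ⟨hu.1, hu.2⟩
  have hcsymm_cu : ∀ u ∈ U, c.symm (c u) = u := fun u hu => c.left_inv hu.1
  have hFes : ∀ u ∈ U, F u ∈ e.source := by
    intro u hu
    have h1 : c u ∈ O := hΦsubO (hWsub hu.2)
    have h2 := h1.2
    rw [mem_preimage, mem_preimage, hcsymm_cu u hu] at h2
    exact h2
  have hhcu : ∀ u ∈ U, h (c u) = (π u, e (F u)) := by
    intro u hu
    have : f₂ (c u) = e (F u) := by
      show e (F (c.symm (c u))) = e (F u)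
      rw [hcsymm_cu u hu]
    exact Prod.ext rfl this
  have hboxmem : ∀ u ∈ U, (π u, e (F u)) ∈ V₁ ×ˢ V₂ := by
    intro u hu
    have h1 : Φ (c u) ∈ V₁ ×ˢ V₂ := hu.2.2
    rw [hΦcoe, hhcu u hu] at h1
    exact h1
  -- the master inverse fact
  have hmaster : ∀ n ∈ V₁, ∀ y ∈ V₂,
      c.symm (Φ.symm (n, y)) ∈ U ∧ π (c.symm (Φ.symm (n, y))) = n ∧
        e (F (c.symm (Φ.symm (n, y)))) = y := by
    intro n hn y hy
    have hbox : (n, y) ∈ V₁ ×ˢ V₂ := ⟨hn, hy⟩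
    have hws : Φ.symm (n, y) ∈ Φ.source := Φ.map_target (hboxsub hbox)
    have hΦw : Φ (Φ.symm (n, y)) = (n, y) := Φ.right_inv (hboxsub hbox)
    have hwW : Φ.symm (n, y) ∈ W := ⟨hws, by rw [mem_preimage, hΦw]; exact hbox⟩
    have hwt : Φ.symm (n, y) ∈ c.target := hΦsubtarget hws
    have husrc : c.symm (Φ.symm (n, y)) ∈ c.source := c.map_target hwt
    have hcu : c (c.symm (Φ.symm (n, y))) = Φ.symm (n, y) := c.right_inv hwt
    have huU : c.symm (Φ.symm (n, y)) ∈ U := ⟨husrc, by rw [mem_preimage, hcu]; exact hwW⟩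
    have hh : h (c (c.symm (Φ.symm (n, y)))) = (n, y) := by
      rw [hcu, ← hΦcoe, hΦw]
    rw [hhcu _ huU] at hh
    exact ⟨huU, congrArg Prod.fst hh, congrArg Prod.snd hh⟩
  -- image identities
  have hπU : π '' U = V₁ := by
    apply Subset.antisymm
    · rintro _ ⟨u, hu, rfl⟩
      exact (hboxmem u hu).1
    · intro n hn
      obtain ⟨huU, hπu, -⟩ := hmaster n hn (Φ x₀).2 hV₂mem
      exact ⟨_, huU, hπu⟩
  have hFU : F '' U = e.symm '' V₂ := by
    apply Subset.antisymm
    · rintro _ ⟨u, hu, rfl⟩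
      refine ⟨e (F u), (hboxmem u hu).2, ?_⟩
      exact e.left_inv (hFes u hu)
    · rintro _ ⟨y, hy, rfl⟩
      obtain ⟨huU, -, hey⟩ := hmaster (Φ x₀).1 hV₁mem y hy
      refine ⟨_, huU, ?_⟩
      have h2 := congrArg e.symm hey
      rwa [e.left_inv (hFes _ huU)] at h2
  have hFUopen : IsOpen (F '' U) := by
    rw [hFU]
    have himg : e.symm '' V₂ = e.source ∩ ⇑e ⁻¹' V₂ := by
      apply Subset.antisymm
      · rintro _ ⟨y, hy, rfl⟩
        exact ⟨e.map_target (hV₂target hy), by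
          rw [mem_preimage, e.right_inv (hV₂target hy)]; exact hy⟩
      · rintro lam ⟨hlam, hlam2⟩
        exact ⟨e lam, hlam2, e.left_inv hlam⟩
    rw [himg]
    exact (continuousOn_extChartAt (I := IL) (F m₀)).isOpen_inter_preimage
      (isOpen_extChartAt_source (F m₀)) hV₂open
  have hFUsub : F '' U ⊆ e.source := by
    rw [hFU]
    rintro _ ⟨y, hy, rfl⟩
    exact e.map_target (hV₂target hy)
  -- inverse properties of S
  have hS_left : ∀ u ∈ U, S (π u, F u) = u := by
    intro u hu
    show c.symm (Φ.symm (π u, e (F u))) = u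
    have h1 : (π u, e (F u)) = Φ (c u) := by
      rw [hΦcoe, hhcu u hu]
    rw [h1, Φ.left_inv (hWsub hu.2), hcsymm_cu u hu]
  have hS_mem_eq : ∀ p ∈ (π '' U) ×ˢ (F '' U),
      S p ∈ U ∧ π (S p) = p.1 ∧ F (S p) = p.2 := by
    rintro ⟨n, lam⟩ ⟨hn, hlam⟩
    rw [hπU] at hn
    rw [hFU] at hlam
    obtain ⟨y, hy, rfl⟩ := hlam
    have hey : e (e.symm y) = y := e.right_inv (hV₂target hy)
    have hSp : S (n, e.symm y) = c.symm (Φ.symm (n, y)) := by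
      show c.symm (Φ.symm (n, e (e.symm y))) = _
      rw [hey]
    obtain ⟨huU, hπu, heF⟩ := hmaster n hn y hy
    refine ⟨by rw [hSp]; exact huU, by rw [hSp]; exact hπu, ?_⟩
    rw [hSp]
    show F (c.symm (Φ.symm (n, y))) = e.symm y
    have h2 := congrArg e.symm heF
    rwa [e.left_inv (hFes _ huU)] at h2
  have hS_right : ∀ p ∈ (π '' U) ×ˢ (F '' U), (π (S p), F (S p)) = p := by
    intro p hp
    obtain ⟨-, h1, h2⟩ := hS_mem_eq p hp
    exact Prod.ext h1 h2
  have hSmaps : Set.MapsTo S ((π '' U) ×ˢ (F '' U)) U := fun p hp => (hS_mem_eq p hp).1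
  have hSsurj : Set.SurjOn S ((π '' U) ×ˢ (F '' U)) U := by
    intro u hu
    refine ⟨(π u, F u), ⟨mem_image_of_mem π hu, mem_image_of_mem F hu⟩, hS_left u hu⟩
  -- smoothness of π
  have hπsmooth : ContMDiffOn IM 𝓘(ℝ, EuclideanSpace ℝ (Fin (d - l))) (⊤ : ℕ∞) π U := by
    have h1 : ContMDiffOn IM 𝓘(ℝ, EM) (⊤ : ℕ∞) c c.source := by
      have := contMDiffOn_extChartAt (n := (⊤ : ℕ∞)) (I := IM) (x := m₀)
      rwa [← extChartAt_source IM] at this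
    have h2 : ContMDiff 𝓘(ℝ, EM) 𝓘(ℝ, EuclideanSpace ℝ (Fin (d - l))) (⊤ : ℕ∞) ψP :=
      (ψP.contDiff.of_le le_top).contMDiff
    exact (h2.comp_contMDiffOn (h1.mono hUsubsource))
  -- smoothness of S on the product
  have hSsmooth : ContMDiffOn ((𝓘(ℝ, EuclideanSpace ℝ (Fin (d - l)))).prod IL) IM (⊤ : ℕ∞) S
      ((π '' U) ×ˢ (F '' U)) := by
    have hg₁ : ContMDiffOn ((𝓘(ℝ, EuclideanSpace ℝ (Fin (d - l)))).prod IL)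
        ((𝓘(ℝ, EuclideanSpace ℝ (Fin (d - l)))).prod 𝓘(ℝ, EL)) (⊤ : ℕ∞)
        (fun p : EuclideanSpace ℝ (Fin (d - l)) × Λ => (p.1, e p.2))
        ((π '' U) ×ˢ (F '' U)) := by
      apply ContMDiffOn.prodMk
      · exact contMDiff_fst.contMDiffOn
      · have h2 : ContMDiffOn IL 𝓘(ℝ, EL) (⊤ : ℕ∞) e e.source := by
          have := contMDiffOn_extChartAt (n := (⊤ : ℕ∞)) (I := IL) (x := F m₀)
          rwa [← extChartAt_source IL] at this
        exact h2.comp (contMDiff_snd.contMDiffOn) (fun p hp => hFUsub hp.2)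
    have hg₂ : ContMDiffOn ((𝓘(ℝ, EuclideanSpace ℝ (Fin (d - l)))).prod 𝓘(ℝ, EL)) 𝓘(ℝ, EM) (⊤ : ℕ∞)
        Φ.symm Φ.target := by
      rw [← modelWithCornersSelf_prod, chartedSpaceSelf_prod]
      exact hΦsymm_cd.contMDiffOn (n := (⊤ : ℕ∞))
    have hg₃ : ContMDiffOn 𝓘(ℝ, EM) IM (⊤ : ℕ∞) c.symm c.target := contMDiffOn_extChartAt_symm m₀
    have hmaps1 : ((π '' U) ×ˢ (F '' U)) ⊆
        (fun p : EuclideanSpace ℝ (Fin (d - l)) × Λ => (p.1, e p.2)) ⁻¹' Φ.target := by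
      rintro ⟨n, lam⟩ ⟨hn, hlam⟩
      rw [hπU] at hn
      have h1 : e lam ∈ V₂ := by
        rw [hFU] at hlam
        obtain ⟨y, hy, rfl⟩ := hlam
        rwa [e.right_inv (hV₂target hy)]
      exact hboxsub ⟨hn, h1⟩
    have hmaps2 : ((π '' U) ×ˢ (F '' U)) ⊆
        (fun p : EuclideanSpace ℝ (Fin (d - l)) × Λ => Φ.symm (p.1, e p.2)) ⁻¹' c.target := by
      intro p hp
      exact hΦsubtarget (Φ.map_target (hmaps1 hp))
    exact hg₃.comp (hg₂.comp hg₁ hmaps1) hmaps2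
  -- surjectivity of the derivative of π on U
  have hπsub : ∀ u ∈ U, Function.Surjective
      (mfderiv IM 𝓘(ℝ, EuclideanSpace ℝ (Fin (d - l))) π u) := by
    intro u hu
    have huchart : u ∈ (chartAt HM m₀).source := by
      rw [← extChartAt_source IM]; exact hUsubsource hu
    have hcd : HasMFDerivAt IM 𝓘(ℝ, EM) c u (mfderiv IM 𝓘(ℝ, EM) c u) :=
      (mdifferentiableAt_extChartAt huchart).hasMFDerivAt
    have hψPd : HasMFDerivAt 𝓘(ℝ, EM) 𝓘(ℝ, EuclideanSpace ℝ (Fin (d - l))) ψP (c u) ψP :=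
      ψP.hasFDerivAt.hasMFDerivAt
    have hπd : HasMFDerivAt IM 𝓘(ℝ, EuclideanSpace ℝ (Fin (d - l))) π u
        (ψP.comp (mfderiv IM 𝓘(ℝ, EM) c u)) := HasMFDerivAt.comp u hψPd hcd
    rw [hπd.mfderiv]
    have hcsurj : Function.Surjective (mfderiv IM 𝓘(ℝ, EM) c u) := by
      have h := mfderiv_extChartAt_comp_mfderivWithin_extChartAt_symm' (I := IM)
        (hUsubsource hu)
      rw [hrangeM, mfderivWithin_univ] at h
      intro v
      exact ⟨mfderiv 𝓘(ℝ, EM) IM c.symm (c u) v, by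
        have := congrArg (fun (T : EM →L[ℝ] EM) => T v) h
        exact this⟩
    exact hψPsurj.comp hcsurj
  -- injectivity of (π, F) on U and the bijection
  have hGinj : Set.InjOn (fun u => (π u, F u)) U := by
    intro u hu v hv huv
    have h0 : ((π u, F u) : EuclideanSpace ℝ (Fin (d - l)) × Λ) = (π v, F v) := huv
    have h1 : S (π u, F u) = S (π v, F v) := congrArg S h0
    rwa [hS_left u hu, hS_left v hv] at h1
  have hGbij : Set.BijOn (fun u => (π u, F u)) U ((π '' U) ×ˢ (F '' U)) := by
    refine ⟨fun u hu => ⟨mem_image_of_mem π hu, mem_image_of_mem F hu⟩, hGinj, ?_⟩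
    intro p hp
    exact ⟨S p, (hS_mem_eq p hp).1, hS_right p hp⟩
  -- the product set is open
  have hπUopen : IsOpen (π '' U) := by rw [hπU]; exact hV₁open
  have hprodOpen : IsOpen ((π '' U) ×ˢ (F '' U)) := hπUopen.prod hFUopen
  -- (π, F) is smooth on U
  have hGsmooth : ContMDiffOn IM ((𝓘(ℝ, EuclideanSpace ℝ (Fin (d - l)))).prod IL) (⊤ : ℕ∞)
      (fun u => (π u, F u)) U := hπsmooth.prodMk hF.contMDiffOn
  -- S is a local diffeomorphism on the product
  have hSlocal : IsLocalDiffeomorphOn ((𝓘(ℝ, EuclideanSpace ℝ (Fin (d - l)))).prod IL) IM (⊤ : ℕ∞) S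
      ((π '' U) ×ˢ (F '' U)) := by
    set Φd : PartialDiffeomorph ((𝓘(ℝ, EuclideanSpace ℝ (Fin (d - l)))).prod IL) IM
        (EuclideanSpace ℝ (Fin (d - l)) × Λ) M (⊤ : ℕ∞) :=
      { toFun := S
        invFun := fun u => (π u, F u)
        source := (π '' U) ×ˢ (F '' U)
        target := U
        map_source' := hSmaps
        map_target' := fun u hu => ⟨mem_image_of_mem π hu, mem_image_of_mem F hu⟩
        left_inv' := fun p hp => hS_right p hp
        right_inv' := fun u hu => hS_left u hu
        open_source := hprodOpen
        open_target := hUopen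
        contMDiffOn_toFun := hSsmooth
        contMDiffOn_invFun := hGsmooth } with hΦd_def
    exact fun ⟨p, hp⟩ => ⟨Φd, hp, fun x hx => rfl⟩
  -- the Hamilton-Jacobi property
  have hHJE : ∀ lam ∈ F '' U, ∀ n ∈ π '' U,
      π (S (n, lam)) = n ∧
      mfderiv 𝓘(ℝ, EuclideanSpace ℝ (Fin (d - l))) IM (fun n' => S (n', lam)) n
          (mfderiv IM 𝓘(ℝ, EuclideanSpace ℝ (Fin (d - l))) π (S (n, lam))
            (X (S (n, lam)))) = X (S (n, lam)) := by
    intro lam hlam n hn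
    have hp : ((n, lam) : EuclideanSpace ℝ (Fin (d - l)) × Λ) ∈ (π '' U) ×ˢ (F '' U) := ⟨hn, hlam⟩
    obtain ⟨huU, hπu, hFu⟩ := hS_mem_eq (n, lam) hp
    refine ⟨hπu, ?_⟩
    set u : M := S (n, lam) with hu_def
    have hSp : MDifferentiableAt ((𝓘(ℝ, EuclideanSpace ℝ (Fin (d - l)))).prod IL) IM S (n, lam) :=
      (hSsmooth.contMDiffAt (hprodOpen.mem_nhds hp)).mdifferentiableAt (by simp)
    have hπdiff : MDifferentiableAt IM 𝓘(ℝ, EuclideanSpace ℝ (Fin (d - l))) π u :=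
      (hπsmooth.contMDiffAt (hUopen.mem_nhds huU)).mdifferentiableAt (by simp)
    have hFdiff : MDifferentiableAt IM IL F u := (hF u).mdifferentiableAt (by simp)
    have hGdiff : MDifferentiableAt IM ((𝓘(ℝ, EuclideanSpace ℝ (Fin (d - l)))).prod IL)
        (fun v => (π v, F v)) u := hπdiff.prodMk hFdiff
    have hGu : ((fun v => (π v, F v)) u) = ((n, lam) : EuclideanSpace ℝ (Fin (d - l)) × Λ) :=
      Prod.ext hπu hFu
    have hSder' : HasMFDerivAt ((𝓘(ℝ, EuclideanSpace ℝ (Fin (d - l)))).prod IL) IM S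
        ((fun v => (π v, F v)) u)
        (mfderiv ((𝓘(ℝ, EuclideanSpace ℝ (Fin (d - l)))).prod IL) IM S (n, lam)) := by
      rw [hGu]
      exact hSp.hasMFDerivAt
    have hcomp : HasMFDerivAt IM IM (S ∘ fun v => (π v, F v)) u
        ((mfderiv ((𝓘(ℝ, EuclideanSpace ℝ (Fin (d - l)))).prod IL) IM S (n, lam)).comp
          (mfderiv IM ((𝓘(ℝ, EuclideanSpace ℝ (Fin (d - l)))).prod IL) (fun v => (π v, F v)) u)) :=
      HasMFDerivAt.comp u hSder' hGdiff.hasMFDerivAt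
    have hid : mfderiv IM IM (S ∘ fun v => (π v, F v)) u
        = ContinuousLinearMap.id ℝ (TangentSpace IM u) := by
      have heq : (S ∘ fun v => (π v, F v)) =ᶠ[nhds u] id :=
        Filter.eventuallyEq_of_mem (hUopen.mem_nhds huU) (fun v hv => hS_left v hv)
      rw [heq.mfderiv_eq, mfderiv_id]
    have hkey : (mfderiv ((𝓘(ℝ, EuclideanSpace ℝ (Fin (d - l)))).prod IL) IM S (n, lam)).comp
        (mfderiv IM ((𝓘(ℝ, EuclideanSpace ℝ (Fin (d - l)))).prod IL) (fun v => (π v, F v)) u)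
        = ContinuousLinearMap.id ℝ (TangentSpace IM u) := by
      rw [← hcomp.mfderiv]
      exact hid
    have hGder : mfderiv IM ((𝓘(ℝ, EuclideanSpace ℝ (Fin (d - l)))).prod IL)
        (fun v => (π v, F v)) u
        = (mfderiv IM 𝓘(ℝ, EuclideanSpace ℝ (Fin (d - l))) π u).prod (mfderiv IM IL F u) :=
      hπdiff.mfderiv_prod hFdiff
    have hXkill : mfderiv IM IL F u (X u) = 0 := hker u
    have happ : (mfderiv IM ((𝓘(ℝ, EuclideanSpace ℝ (Fin (d - l)))).prod IL)
        (fun v => (π v, F v)) u) (X u)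
        = ((mfderiv IM 𝓘(ℝ, EuclideanSpace ℝ (Fin (d - l))) π u) (X u), 0) := by
      rw [hGder]
      exact Prod.ext rfl hXkill
    have hSapp : mfderiv ((𝓘(ℝ, EuclideanSpace ℝ (Fin (d - l)))).prod IL) IM S (n, lam)
        ((mfderiv IM 𝓘(ℝ, EuclideanSpace ℝ (Fin (d - l))) π u) (X u), 0) = X u := by
      refine Eq.trans (congrArg (mfderiv ((𝓘(ℝ, EuclideanSpace ℝ (Fin (d - l)))).prod IL) IM S (n, lam)) happ.symm) ?_
      have := congrArg (fun (T : TangentSpace IM u →L[ℝ] TangentSpace IM u) => T (X u)) hkey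
      exact this
    have h1 : MDifferentiableAt 𝓘(ℝ, EuclideanSpace ℝ (Fin (d - l)))
        ((𝓘(ℝ, EuclideanSpace ℝ (Fin (d - l)))).prod IL)
        (fun n' : EuclideanSpace ℝ (Fin (d - l))  => ((n', lam) : EuclideanSpace ℝ (Fin (d - l)) × Λ)) n :=
      mdifferentiableAt_id.prodMk mdifferentiableAt_const
    have hσ : HasMFDerivAt 𝓘(ℝ, EuclideanSpace ℝ (Fin (d - l))) IM
        (fun n' => S (n', lam)) n
        ((mfderiv ((𝓘(ℝ, EuclideanSpace ℝ (Fin (d - l)))).prod IL) IM S (n, lam)).comp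
          (mfderiv 𝓘(ℝ, EuclideanSpace ℝ (Fin (d - l)))
            ((𝓘(ℝ, EuclideanSpace ℝ (Fin (d - l)))).prod IL)
            (fun n' : EuclideanSpace ℝ (Fin (d - l)) =>
              ((n', lam) : EuclideanSpace ℝ (Fin (d - l)) × Λ)) n)) :=
      by
        have hSder2 : HasMFDerivAt ((𝓘(ℝ, EuclideanSpace ℝ (Fin (d - l)))).prod IL) IM S
            ((fun n' : EuclideanSpace ℝ (Fin (d - l)) =>
              ((n', lam) : EuclideanSpace ℝ (Fin (d - l)) × Λ)) n)
            (mfderiv ((𝓘(ℝ, EuclideanSpace ℝ (Fin (d - l)))).prod IL) IM S (n, lam)) := by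
          exact hSp.hasMFDerivAt
        exact HasMFDerivAt.comp (g := S)
          (f := fun n' : EuclideanSpace ℝ (Fin (d - l)) =>
            ((n', lam) : EuclideanSpace ℝ (Fin (d - l)) × Λ)) n hSder2 h1.hasMFDerivAt
    rw [hσ.mfderiv, mfderiv_prod_left]
    exact hSapp
  exact ⟨U, π, hUopen, hm₀U, hπsmooth, hπUopen, hFUopen, hπsub, hGbij, S, hS_left, hS_right,
    hSmaps, hSsurj, hSsmooth, hSlocal, hHJE, fun p hp => (hS_mem_eq p hp).2.2⟩
end
end
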